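/- arXiv:1601.06390 — 6 statements merged into one kernel-verified Lean document; each statement's English description precedes it below -/
import Mathlib

section
/- Every connected component of the quasi-crystal graph Γ(hypo_n) contains exactly one highest-weight word: for every u ∈ 𝒜_n^* there is exactly one word w in the connected component Γ(hypo_n, u) such that e_i(w) is undefined for all i ∈ {1,...,n−1}. -/
/-!
Common setup: words over the alphabet `𝒜_n = {1,…,n}` (modelled as `List ℕ`),
quasi-Kashiwara operators, the quasi-crystal graph, Kashiwara operators,
quasi-ribbon words, and the hypoplactic congruence.
-/

namespace HypoCrystal

noncomputable section
open scoped Classical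

/-- `u` is a word over the alphabet `𝒜_n = {1,…,n}`. -/
def IsWord (n : ℕ) (u : List ℕ) : Prop := ∀ a ∈ u, 1 ≤ a ∧ a ≤ n

/-- `u` has an `i`-inversion: some letter `i+1` occurs strictly to the left of some letter `i`. -/
def HasInv (i : ℕ) (u : List ℕ) : Prop :=
  ∃ v w x : List ℕ, u = v ++ (i + 1) :: w ++ i :: x

/-- Replace the first (leftmost) occurrence of `a` by `b`, if any; otherwise `none`. -/
def replaceFirst (a b : ℕ) : List ℕ → Option (List ℕ)
  | [] => none
  | x :: xs => if x = a then some (b :: xs) else (replaceFirst a b xs).map (x :: ·)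

/-- The quasi-Kashiwara raising operator `e_i` (partial map, `none` = undefined):
if `u` has an `i`-inversion it is undefined; otherwise it replaces the leftmost
letter `i+1` by `i` (undefined if there is no letter `i+1`). -/
def qe (i : ℕ) (u : List ℕ) : Option (List ℕ) :=
  if HasInv i u then none else replaceFirst (i + 1) i u

/-- The quasi-Kashiwara lowering operator `f_i` (partial map, `none` = undefined):
if `u` has an `i`-inversion it is undefined; otherwise it replaces the rightmost
letter `i` by `i+1` (undefined if there is no letter `i`). -/
def qf (i : ℕ) (u : List ℕ) : Option (List ℕ) :=
  if HasInv i u then none else (replaceFirst i (i + 1) u.reverse).map List.reverse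

/-- Weight of a word: `wt u a` is the number of occurrences of the letter `a` in `u`. -/
def wt (u : List ℕ) : ℕ → ℕ := fun a => u.count a

/-- There is an edge labelled `i` from `u` to `v` in the quasi-crystal graph `Γ(hypo_n)`. -/
def Edge (n i : ℕ) (u v : List ℕ) : Prop := 1 ≤ i ∧ i < n ∧ qf i u = some v

/-- `u` and `v` are adjacent (in the underlying undirected graph) in `Γ(hypo_n)`. -/
def Adj (n : ℕ) (u v : List ℕ) : Prop := ∃ i, Edge n i u v ∨ Edge n i v u

/-- `v` lies in the connected component `Γ(hypo_n, u)` of `u` in the quasi-crystal graph. -/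
def SameComp (n : ℕ) : List ℕ → List ℕ → Prop := Relation.ReflTransGen (Adj n)

/-- `u` is a highest-weight word: no raising operator `e_i` is defined on `u`. -/
def HighestWeight (n : ℕ) (u : List ℕ) : Prop := ∀ i, 1 ≤ i → i < n → qe i u = none

/-- `θ` is a quasi-crystal isomorphism from the component of `u` onto the component of `v`:
a weight-preserving bijection preserving labelled edges in both directions. -/
def IsQCIso (n : ℕ) (u v : List ℕ) (θ : List ℕ → List ℕ) : Prop :=
  Set.BijOn θ {x | SameComp n u x} {y | SameComp n v y} ∧
  (∀ x, SameComp n u x → wt (θ x) = wt x) ∧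
  (∀ x y, SameComp n u x → SameComp n u y → ∀ i, (Edge n i x y ↔ Edge n i (θ x) (θ y)))

/-- `u ∼ v`: there is a quasi-crystal isomorphism between the components of `u` and `v`
taking `u` to `v`. -/
def Sim (n : ℕ) (u v : List ℕ) : Prop :=
  ∃ θ : List ℕ → List ℕ, IsQCIso n u v θ ∧ θ u = v

/-- The standardization of `u`: position `k` receives the rank (starting at 1) of the
pair `(u_k, k)` among all pairs `(u_l, l)` ordered lexicographically. -/
def std (u : List ℕ) : List ℕ :=
  (List.range u.length).map fun k =>
    1 + ((List.range u.length).filter fun l =>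
      u.getD l 0 < u.getD k 0 ∨ (u.getD l 0 = u.getD k 0 ∧ l < k)).length

/-- The maximal strictly decreasing factors of a word (the columns of its
quasi-ribbon tabloid, each read bottom-to-top). -/
def decFactors : List ℕ → List (List ℕ)
  | [] => []
  | a :: rest =>
    match decFactors rest with
    | (b :: f) :: fs => if b < a then (a :: b :: f) :: fs else [a] :: (b :: f) :: fs
    | l => [a] :: l

/-- `w` is a quasi-ribbon word: its quasi-ribbon tabloid is a quasi-ribbon tableau,
i.e. the bottom entry of each column is ≤ the top entry of the next column. -/
def IsQRWord (w : List ℕ) : Prop :=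
  (decFactors w).Chain' fun c d => c.headD 0 ≤ d.getLastD 0

/-- Row lengths (top to bottom) of the ribbon diagram whose column heights
(left to right) are given. -/
def rowLengths : List ℕ → List ℕ
  | [] => []
  | [d] => List.replicate d 1
  | d :: e :: rest =>
    List.replicate (d - 1) 1 ++
      (match rowLengths (e :: rest) with
       | [] => [1]
       | r :: rs => (r + 1) :: rs)

/-- The shape (as a composition, listed top row first) of the quasi-ribbon tabloid of `w`. -/
def shape (w : List ℕ) : List ℕ := rowLengths ((decFactors w).map List.length)

/-- Columns of the quasi-ribbon tableau of shape `α` whose `j`-th row consists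
entirely of symbols `j`, where rows are labelled starting from `j₀`. -/
def hwCols : List ℕ → ℕ → List (List ℕ)
  | [], _ => []
  | [a], j => List.replicate a [j]
  | a :: b :: rest, j =>
    List.replicate (a - 1) [j] ++
      (match hwCols (b :: rest) (j + 1) with
       | [] => [[j]]
       | c :: cs => (c ++ [j]) :: cs)

/-- The column reading of the quasi-ribbon tableau of shape `α` whose `j`-th row
consists entirely of symbols `j`. -/
def hwQR (α : List ℕ) : List ℕ := (hwCols α 1).flatten

/-- The defining relations `R_hypo` of the hypoplactic monoid of rank `n`. -/
inductive HypoRel (n : ℕ) : List ℕ → List ℕ → Prop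
  | knuth1 {a b c : ℕ} : 1 ≤ a → a ≤ b → b < c → c ≤ n → HypoRel n [a, c, b] [c, a, b]
  | knuth2 {a b c : ℕ} : 1 ≤ a → a < b → b ≤ c → c ≤ n → HypoRel n [b, a, c] [b, c, a]
  | quasi1 {a b c d : ℕ} : 1 ≤ a → a ≤ b → b < c → c ≤ d → d ≤ n →
      HypoRel n [c, a, d, b] [a, c, b, d]
  | quasi2 {a b c d : ℕ} : 1 ≤ a → a < b → b ≤ c → c < d → d ≤ n →
      HypoRel n [b, d, a, c] [d, b, c, a]

/-- The hypoplactic congruence `≡_hypo`: the congruence on the free monoid generated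
by the relations `R_hypo`. -/
inductive HypoCong (n : ℕ) : List ℕ → List ℕ → Prop
  | of {u v} : HypoRel n u v → HypoCong n u v
  | refl (u) : HypoCong n u u
  | symm {u v} : HypoCong n u v → HypoCong n v u
  | trans {u v w} : HypoCong n u v → HypoCong n v w → HypoCong n u w
  | append {u v u' v'} : HypoCong n u v → HypoCong n u' v' →
      HypoCong n (u ++ u') (v ++ v')

/-- The signature word of `u` for index `i`: each letter `i` becomes `(position, true)`
(that is, `+`) and each letter `i+1` becomes `(position, false)` (that is, `−`). -/
def signWord (i : ℕ) (u : List ℕ) : List (ℕ × Bool) :=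
  (u.zipIdx.map Prod.swap).filterMap fun pa =>
    if pa.2 = i then some (pa.1, true)
    else if pa.2 = i + 1 then some (pa.1, false) else none

/-- Iteratively delete factors `−+` from a signature word, producing the reduced
word `+^p −^q`. -/
def reduce : List (ℕ × Bool) → List (ℕ × Bool)
  | [] => []
  | x :: rest =>
    match reduce rest with
    | y :: rest' => if x.2 = false ∧ y.2 = true then rest' else x :: y :: rest'
    | [] => [x]

/-- The Kashiwara raising operator `ẽ_i`, computed by the signature rule: change to `i`
the letter `i+1` corresponding to the leftmost `−` of the reduced signature word. -/
def KE (i : ℕ) (u : List ℕ) : Option (List ℕ) :=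
  (((reduce (signWord i u)).filter fun x => !x.2).head?).map fun x => u.set x.1 i

/-- The Kashiwara lowering operator `f̃_i`, computed by the signature rule: change to `i+1`
the letter `i` corresponding to the rightmost `+` of the reduced signature word. -/
def KF (i : ℕ) (u : List ℕ) : Option (List ℕ) :=
  (((reduce (signWord i u)).filter fun x => x.2).getLast?).map fun x => u.set x.1 (i + 1)

/-- The Schützenberger involution on `𝒜_n^*`: reverse the word and replace each
letter `a` by `n − a + 1`. -/
def sharp (n : ℕ) (u : List ℕ) : List ℕ := u.reverse.map fun a => n + 1 - a

/-- The largest letter occurring in `u` (0 for the empty word). -/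
def maxLetter (u : List ℕ) : ℕ := u.foldr max 0

/-- `β` is coarser than `α` (`β ⪯ α`): they have the same weight and every proper
partial sum of `β` is a proper partial sum of `α`. -/
def Coarser (β α : List ℕ) : Prop :=
  β.sum = α.sum ∧ ∀ p < β.length, ∃ m < α.length, (β.take p).sum = (α.take m).sum

end
end HypoCrystal

namespace HypoCrystal

/-! ### Auxiliary lemmas -/

lemma mem_of_hasInv {i : ℕ} {u : List ℕ} (h : HasInv i u) : i ∈ u := by
  obtain ⟨v, w, x, rfl⟩ := h; simp

lemma hasInv_cons {i a : ℕ} {u : List ℕ} :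
    HasInv i (a :: u) ↔ (a = i + 1 ∧ i ∈ u) ∨ HasInv i u := by
  constructor
  · rintro ⟨v, w, x, h⟩
    cases v with
    | nil =>
      rw [List.nil_append] at h
      injection h with h1 h2
      exact Or.inl ⟨h1, by rw [h2]; simp⟩
    | cons b v' =>
      simp only [List.cons_append, List.cons.injEq] at h
      exact Or.inr ⟨v', w, x, h.2⟩
  · rintro (⟨rfl, hm⟩ | ⟨v, w, x, rfl⟩)
    · obtain ⟨s, t, rfl⟩ := List.append_of_mem hm
      exact ⟨[], s, t, rfl⟩
    · exact ⟨a :: v, w, x, rfl⟩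

lemma replaceFirst_eq_some_iff {a b : ℕ} {u v : List ℕ} :
    replaceFirst a b u = some v ↔ ∃ p q, u = p ++ a :: q ∧ a ∉ p ∧ v = p ++ b :: q := by
  induction u generalizing v with
  | nil =>
    simp only [replaceFirst]
    constructor
    · intro h; cases h
    · rintro ⟨p, q, h, -, -⟩; exact absurd h (by simp)
  | cons x xs ih =>
    simp only [replaceFirst]
    by_cases hx : x = a
    · subst hx
      rw [if_pos rfl]
      constructor
      · intro h
        injection h with h
        exact ⟨[], xs, rfl, by simp, by simp [h.symm]⟩
      · rintro ⟨p, q, hu, hap, hv⟩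
        cases p with
        | nil =>
          rw [List.nil_append] at hu
          injection hu with h1 h2
          rw [hv, h2, List.nil_append]
        | cons y p' =>
          rw [List.cons_append] at hu
          injection hu with h1 h2
          exact absurd (h1 ▸ (List.mem_cons_self : y ∈ y :: p')) hap
    · simp only [if_neg hx, Option.map_eq_some_iff]
      constructor
      · rintro ⟨w, hw, rfl⟩
        obtain ⟨p, q, rfl, hap, rfl⟩ := ih.mp hw
        refine ⟨x :: p, q, rfl, ?_, rfl⟩
        intro hm
        rcases List.mem_cons.mp hm with h | h
        · exact hx h.symm
        · exact hap h
      · rintro ⟨p, q, hu, hap, hv⟩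
        cases p with
        | nil =>
          rw [List.nil_append] at hu
          injection hu with h1 h2
          exact absurd h1 hx
        | cons y p' =>
          rw [List.cons_append] at hu hv
          injection hu with h1 h2
          subst h1
          refine ⟨p' ++ b :: q, ih.mpr ⟨p', q, h2, fun hm => hap (List.mem_cons_of_mem _ hm), rfl⟩, ?_⟩
          rw [hv]

lemma hasInv_append_iff₁ {i : ℕ} (p q : List ℕ) (hp : (i + 1) ∉ p) :
    HasInv i (p ++ (i + 1) :: q) ↔ i ∈ q := by
  induction p with
  | nil =>
    simp only [List.nil_append, hasInv_cons]
    constructor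
    · rintro (h | h)
      · exact h.2
      · exact mem_of_hasInv h
    · intro h; exact Or.inl (by simp [h])
  | cons a p ih =>
    have ha : a ≠ i + 1 := fun h => hp (h ▸ (List.mem_cons_self : a ∈ a :: p))
    have hp' : (i + 1) ∉ p := fun h => hp (List.mem_cons_of_mem _ h)
    simp only [List.cons_append, hasInv_cons, ih hp']
    constructor
    · rintro (⟨h, -⟩ | h)
      · exact absurd h ha
      · exact h
    · exact Or.inr

lemma hasInv_append_iff₂ {i : ℕ} (p q : List ℕ) (hq : i ∉ q) :
    HasInv i (p ++ i :: q) ↔ (i + 1) ∈ p := by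
  induction p with
  | nil =>
    simp only [List.nil_append, hasInv_cons, List.not_mem_nil, iff_false]
    rintro (⟨h, -⟩ | h)
    · omega
    · exact hq (mem_of_hasInv h)
  | cons a p ih =>
    simp only [List.cons_append, hasInv_cons, ih, List.mem_cons]
    have hm : i ∈ p ++ i :: q := by simp
    tauto

lemma qe_some_iff {i : ℕ} {u v : List ℕ} :
    qe i u = some v ↔
      ∃ p q, u = p ++ (i + 1) :: q ∧ (i + 1) ∉ p ∧ i ∉ q ∧ v = p ++ i :: q := by
  unfold qe
  by_cases h : HasInv i u
  · simp only [if_pos h]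
    constructor
    · intro hc; cases hc
    · rintro ⟨p, q, rfl, hp, hq, rfl⟩
      exact absurd ((hasInv_append_iff₁ p q hp).mp h) hq
  · simp only [if_neg h, replaceFirst_eq_some_iff]
    constructor
    · rintro ⟨p, q, rfl, hp, rfl⟩
      exact ⟨p, q, rfl, hp, fun hq => h ((hasInv_append_iff₁ p q hp).mpr hq), rfl⟩
    · rintro ⟨p, q, h1, h2, h3, h4⟩
      exact ⟨p, q, h1, h2, h4⟩

lemma qf_some_iff {i : ℕ} {u v : List ℕ} :
    qf i u = some v ↔
      ∃ p q, u = p ++ i :: q ∧ (i + 1) ∉ p ∧ i ∉ q ∧ v = p ++ (i + 1) :: q := by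
  unfold qf
  by_cases h : HasInv i u
  · simp only [if_pos h]
    constructor
    · intro hc; cases hc
    · rintro ⟨p, q, rfl, hp, hq, rfl⟩
      exact absurd ((hasInv_append_iff₂ p q hq).mp h) hp
  · simp only [if_neg h, Option.map_eq_some_iff]
    constructor
    · rintro ⟨w, hw, rfl⟩
      obtain ⟨p', q', hur, hip', hweq⟩ := replaceFirst_eq_some_iff.mp hw
      have hu : u = q'.reverse ++ i :: p'.reverse := by
        have := congrArg List.reverse hur
        simpa using this
      subst hu
      refine ⟨q'.reverse, p'.reverse, rfl, ?_, by simpa using hip', by simp [hweq]⟩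
      intro hc
      exact h ((hasInv_append_iff₂ q'.reverse p'.reverse (by simpa using hip')).mpr hc)
    · rintro ⟨p, q, rfl, hp, hq, rfl⟩
      refine ⟨q.reverse ++ (i + 1) :: p.reverse, ?_, by simp⟩
      refine replaceFirst_eq_some_iff.mpr ⟨q.reverse, p.reverse, by simp, by simpa using hq, rfl⟩

lemma qe_iff_qf {i : ℕ} {u v : List ℕ} : qe i u = some v ↔ qf i v = some u := by
  rw [qe_some_iff, qf_some_iff]
  constructor
  · rintro ⟨p, q, rfl, h1, h2, rfl⟩
    exact ⟨p, q, rfl, h1, h2, rfl⟩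
  · rintro ⟨p, q, rfl, h1, h2, rfl⟩
    exact ⟨p, q, rfl, h1, h2, rfl⟩

lemma diamond_aux {i j : ℕ} {p r q' : List ℕ} (hij : i ≠ j)
    (hip : (i + 1) ∉ p) (hiq : i ∉ r ++ (j + 1) :: q')
    (hjp : (j + 1) ∉ p ++ (i + 1) :: r) (hjq : j ∉ q') :
    ∃ w, qe j (p ++ i :: (r ++ (j + 1) :: q')) = some w ∧
      qe i ((p ++ (i + 1) :: r) ++ j :: q') = some w := by
  simp only [List.mem_append, List.mem_cons, not_or] at hiq hjp
  refine ⟨p ++ i :: (r ++ j :: q'), ?_, ?_⟩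
  · have : p ++ i :: (r ++ (j + 1) :: q') = (p ++ i :: r) ++ (j + 1) :: q' := by simp
    rw [this]
    refine qe_some_iff.mpr ⟨p ++ i :: r, q', rfl, ?_, hjq, by simp⟩
    simp only [List.mem_append, List.mem_cons, not_or]
    exact ⟨hjp.1, fun h => hiq.2.1 h.symm, hjp.2.2⟩
  · have : (p ++ (i + 1) :: r) ++ j :: q' = p ++ (i + 1) :: (r ++ j :: q') := by simp
    rw [this]
    refine qe_some_iff.mpr ⟨p, r ++ j :: q', rfl, hip, ?_, rfl⟩
    simp only [List.mem_append, List.mem_cons, not_or]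
    exact ⟨hiq.1, hij, hiq.2.2⟩

lemma diamond {i j : ℕ} {u v v' : List ℕ} (hij : i ≠ j)
    (hv : qe i u = some v) (hv' : qe j u = some v') :
    ∃ w, qe j v = some w ∧ qe i v' = some w := by
  obtain ⟨p, q, rfl, hip, hiq, rfl⟩ := qe_some_iff.mp hv
  obtain ⟨p', q', hu, hjp, hjq, rfl⟩ := qe_some_iff.mp hv'
  rcases List.append_eq_append_iff.mp hu with ⟨a, ha1, ha2⟩ | ⟨c, hc1, hc2⟩
  · cases a with
    | nil =>
      simp only [List.append_nil] at ha1
      simp only [List.nil_append, List.cons.injEq] at ha2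
      omega
    | cons x r =>
      simp only [List.cons_append, List.cons.injEq] at ha2
      obtain ⟨hx, rfl⟩ := ha2
      subst hx
      rw [ha1] at hjp ⊢
      exact diamond_aux hij hip hiq hjp hjq
  · cases c with
    | nil =>
      simp only [List.append_nil] at hc1
      simp only [List.nil_append, List.cons.injEq] at hc2
      omega
    | cons x r =>
      simp only [List.cons_append, List.cons.injEq] at hc2
      obtain ⟨hx, rfl⟩ := hc2
      subst hx
      rw [hc1] at hip ⊢
      obtain ⟨w, hw1, hw2⟩ := diamond_aux (Ne.symm hij) hjp hjq hip hiq
      exact ⟨w, hw2, hw1⟩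

/-- One raising step in the quasi-crystal graph. -/
def EStep (n : ℕ) (u v : List ℕ) : Prop := ∃ i, 1 ≤ i ∧ i < n ∧ qe i u = some v

lemma estep_sum_lt {n : ℕ} {u v : List ℕ} (h : EStep n u v) : v.sum < u.sum := by
  obtain ⟨i, -, -, hq⟩ := h
  obtain ⟨p, q, rfl, -, -, rfl⟩ := qe_some_iff.mp hq
  simp [List.sum_append]

lemma highestWeight_iff {n : ℕ} {u : List ℕ} :
    HighestWeight n u ↔ ∀ v, ¬ EStep n u v := by
  constructor
  · rintro h v ⟨i, h1, h2, h3⟩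
    rw [h i h1 h2] at h3; cases h3
  · intro h i h1 h2
    cases hq : qe i u with
    | none => rfl
    | some v => exact absurd ⟨i, h1, h2, hq⟩ (h v)

lemma exists_reach (n : ℕ) (u : List ℕ) :
    ∃ w, Relation.ReflTransGen (EStep n) u w ∧ HighestWeight n w := by
  generalize hm : u.sum = m
  induction m using Nat.strong_induction_on generalizing u with
  | _ m ih =>
    by_cases h : HighestWeight n u
    · exact ⟨u, .refl, h⟩
    · rw [highestWeight_iff] at h
      push_neg at h
      obtain ⟨v, hv⟩ := h
      obtain ⟨w, hw, hhw⟩ := ih v.sum (hm ▸ estep_sum_lt hv) v rfl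
      exact ⟨w, .head hv hw, hhw⟩

lemma estep_diamond {n : ℕ} {a b c : List ℕ} (hab : EStep n a b) (hac : EStep n a c) :
    ∃ d, Relation.ReflGen (EStep n) b d ∧ Relation.ReflTransGen (EStep n) c d := by
  obtain ⟨i, hi1, hi2, hib⟩ := hab
  obtain ⟨j, hj1, hj2, hjc⟩ := hac
  by_cases hij : i = j
  · subst hij
    rw [hib] at hjc
    injection hjc with h
    subst h
    exact ⟨b, .refl, .refl⟩
  · obtain ⟨w, h1, h2⟩ := diamond hij hib hjc
    exact ⟨w, .single ⟨j, hj1, hj2, h1⟩, .single ⟨i, hi1, hi2, h2⟩⟩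

lemma nf_unique {n : ℕ} {u w₁ w₂ : List ℕ}
    (h1 : Relation.ReflTransGen (EStep n) u w₁) (hw1 : HighestWeight n w₁)
    (h2 : Relation.ReflTransGen (EStep n) u w₂) (hw2 : HighestWeight n w₂) :
    w₁ = w₂ := by
  obtain ⟨d, hd1, hd2⟩ :=
    Relation.church_rosser (fun a b c hab hac => estep_diamond hab hac) h1 h2
  have e1 : w₁ = d := by
    rcases Relation.ReflTransGen.cases_head hd1 with rfl | ⟨c, hc, -⟩
    · rfl
    · exact absurd hc (highestWeight_iff.mp hw1 c)
  have e2 : w₂ = d := by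
    rcases Relation.ReflTransGen.cases_head hd2 with rfl | ⟨c, hc, -⟩
    · rfl
    · exact absurd hc (highestWeight_iff.mp hw2 c)
  rw [e1, e2]

lemma adj_cases {n : ℕ} {u v : List ℕ} (h : Adj n u v) :
    EStep n u v ∨ EStep n v u := by
  obtain ⟨i, ⟨h1, h2, h3⟩ | ⟨h1, h2, h3⟩⟩ := h
  · exact Or.inr ⟨i, h1, h2, qe_iff_qf.mpr h3⟩
  · exact Or.inl ⟨i, h1, h2, qe_iff_qf.mpr h3⟩

lemma estep_adj {n : ℕ} {u v : List ℕ} (h : EStep n u v) : Adj n u v := by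
  obtain ⟨i, h1, h2, h3⟩ := h
  exact ⟨i, Or.inr ⟨h1, h2, qe_iff_qf.mp h3⟩⟩

lemma reach_eq_of_sameComp {n : ℕ} {u v : List ℕ} (h : SameComp n u v) :
    ∀ w w', Relation.ReflTransGen (EStep n) u w → HighestWeight n w →
      Relation.ReflTransGen (EStep n) v w' → HighestWeight n w' → w = w' := by
  induction h with
  | refl => exact fun w w' h1 hw1 h2 hw2 => nf_unique h1 hw1 h2 hw2
  | @tail b c hub hadj ih =>
    intro w w' h1 hw1 h2 hw2
    rcases adj_cases hadj with hstep | hstep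
    · exact ih w w' h1 hw1 (.head hstep h2) hw2
    · obtain ⟨w'', hr'', hw''⟩ := exists_reach n b
      exact (ih w w'' h1 hw1 hr'' hw'').trans
        (nf_unique (.head hstep hr'') hw'' h2 hw2)

/-- Every connected component of the quasi-crystal graph `Γ(hypo_n)`
contains exactly one highest-weight word: for every `u ∈ 𝒜_n^*` there is exactly one
word `w` in the component `Γ(hypo_n, u)` with `e_i(w)` undefined for all
`i ∈ {1,…,n−1}`. -/
theorem unique_highestWeight_in_component (n : ℕ) (u : List ℕ) (hu : IsWord n u) :
    ∃! w, SameComp n u w ∧ HighestWeight n w := by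
  obtain ⟨w, hr, hw⟩ := exists_reach n u
  refine ⟨w, ⟨Relation.ReflTransGen.mono (fun a b hab => estep_adj hab) _ _ hr, hw⟩, ?_⟩
  rintro y ⟨hc, hy⟩
  exact (reach_eq_of_sameComp hc w y hr hw .refl hy).symm

end HypoCrystal
end

section
/- A word u ∈ 𝒜_n^* is highest-weight (i.e., e_i(u) is undefined for all i ∈ {1,...,n−1}) if and only if u contains every symbol of {1,...,max(u)} and u has an i-inversion for every i ∈ {1,...,max(u)−1}, where max(u) denotes the largest letter occurring in u (with max of the empty word taken to be 0). -/
namespace HypoCrystal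

lemma replaceFirst_eq_none (a b : ℕ) : ∀ u : List ℕ, replaceFirst a b u = none ↔ a ∉ u := by
  intro u
  induction u with
  | nil => simp [replaceFirst]
  | cons x xs ih =>
    by_cases h : x = a <;> simp [replaceFirst, h, ih, eq_comm]
    exact fun _ => fun he => h he.symm

lemma qe_eq_none (i : ℕ) (u : List ℕ) : qe i u = none ↔ HasInv i u ∨ (i + 1) ∉ u := by
  unfold qe
  by_cases h : HasInv i u <;> simp [h, replaceFirst_eq_none]

lemma hasInv_mem {i : ℕ} {u : List ℕ} (h : HasInv i u) : i ∈ u ∧ (i + 1) ∈ u := by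
  obtain ⟨v, w, x, rfl⟩ := h
  simp

lemma le_maxLetter {u : List ℕ} {a : ℕ} (h : a ∈ u) : a ≤ maxLetter u := by
  induction u with
  | nil => simp at h
  | cons x xs ih =>
    simp only [maxLetter, List.foldr_cons]
    rcases List.mem_cons.mp h with rfl | h
    · exact le_max_left _ _
    · exact le_trans (ih h) (le_max_right _ _)

lemma maxLetter_mem {u : List ℕ} (h : maxLetter u ≠ 0) : maxLetter u ∈ u := by
  induction u with
  | nil => simp [maxLetter] at h
  | cons x xs ih =>
    simp only [maxLetter, List.foldr_cons] at *
    rcases max_cases x (xs.foldr max 0) with ⟨he, _⟩ | ⟨he, _⟩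
    · rw [he]; exact List.mem_cons_self
    · rw [he] at h ⊢; exact List.mem_cons_of_mem _ (ih h)

/-- A word `u ∈ 𝒜_n^*` is highest-weight (i.e. `e_i(u)` is undefined
for all `i ∈ {1,…,n−1}`) if and only if `u` contains every symbol of
`{1,…,max(u)}` and `u` has an `i`-inversion for every `i ∈ {1,…,max(u)−1}`, where
`max(u)` is the largest letter of `u` (taken to be `0` for the empty word). -/
theorem highestWeight_characterization (n : ℕ) (u : List ℕ) (hu : IsWord n u) :
    HighestWeight n u ↔
      ((∀ j, 1 ≤ j → j ≤ maxLetter u → j ∈ u) ∧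
       (∀ i, 1 ≤ i → i < maxLetter u → HasInv i u)) := by
  set m := maxLetter u with hm
  constructor
  · intro hw
    have hmn : m ≠ 0 → m ≤ n := fun h0 => (hu m (maxLetter_mem h0)).2
    -- part 1 by descending induction
    have key : ∀ d j, j = m - d → 1 ≤ j → j ≤ m → j ∈ u ∧ (j < m → HasInv j u) := by
      intro d
      induction d with
      | zero =>
        intro j hj h1 h2
        simp at hj
        subst hj
        exact ⟨maxLetter_mem (by omega), by omega⟩
      | succ d ih =>
        intro j hj h1 h2
        rcases eq_or_lt_of_le h2 with rfl | hlt
        · exact ⟨maxLetter_mem (by omega), by omega⟩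
        · have hj1 : j + 1 = m - d := by omega
          have hmem1 : (j + 1) ∈ u := (ih (j + 1) hj1 (by omega) (by omega)).1
          have hjn : j < n := by have := hmn (by omega); omega
          have := (qe_eq_none j u).mp (hw j h1 hjn)
          rcases this with hinv | hnot
          · exact ⟨(hasInv_mem hinv).1, fun _ => hinv⟩
          · exact absurd hmem1 hnot
    refine ⟨fun j h1 h2 => (key (m - j) j (by omega) h1 h2).1,
           fun i h1 h2 => (key (m - i) i (by omega) h1 (by omega)).2 h2⟩
  · rintro ⟨hall, hinv⟩ i h1 h2
    rw [qe_eq_none]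
    by_cases hle : i + 1 ≤ m
    · exact Or.inl (hinv i h1 (by omega))
    · exact Or.inr fun hmem => hle (le_maxLetter hmem)

end HypoCrystal
end

section
/- For a composition α, the number of quasi-ribbon tableaux of shape α with entries in 𝒜_n (equivalently, the number of quasi-ribbon words of shape α in 𝒜_n^*) equals the binomial coefficient C(n + |α| − ℓ(α), n − ℓ(α)) if ℓ(α) ≤ n, and equals 0 if ℓ(α) > n. -/
namespace HypoCrystal

lemma flatten_decFactors (w : List ℕ) : (decFactors w).flatten = w := by
  induction w with
  | nil => rfl
  | cons a rest ih =>
    rw [decFactors]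
    rcases h : decFactors rest with _ | ⟨c, fs⟩
    · simp_all
    · rcases c with _ | ⟨b, f⟩
      · simp_all
      · rw [h] at ih; by_cases hba : b < a
        · simp [if_pos hba, ← ih]
        · simp [if_neg hba, ← ih]

lemma decFactors_ne_nil {w : List ℕ} : ∀ c ∈ decFactors w, c ≠ [] := by
  induction w with
  | nil => simp [decFactors]
  | cons a rest ih =>
    rw [decFactors]
    rcases h : decFactors rest with _ | ⟨c, fs⟩
    · simp_all
    · rcases c with _ | ⟨b, f⟩
      · simp_all
      · by_cases hba : b < a <;> simp_all <;> aesop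

lemma decFactors_head (a : ℕ) (rest : List ℕ) :
    ∃ s ss, decFactors (a :: rest) = (a :: s) :: ss := by
  rw [decFactors]
  rcases h : decFactors rest with _ | ⟨c, fs⟩
  · exact ⟨[], [], rfl⟩
  · rcases c with _ | ⟨b, f⟩
    · exact ⟨[], [] :: fs, rfl⟩
    · by_cases hba : b < a
      · exact ⟨b :: f, fs, by simp [hba]⟩
      · exact ⟨[], (b :: f) :: fs, by simp [hba]⟩

lemma decFactors_cons_lt {a b : ℕ} {r f fs} (h : decFactors r = (b :: f) :: fs)
    (hba : b < a) : decFactors (a :: r) = (a :: b :: f) :: fs := by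
  rw [decFactors, h]; simp [hba]

lemma decFactors_cons_ge {a b : ℕ} {r f fs} (h : decFactors r = (b :: f) :: fs)
    (hba : ¬ b < a) : decFactors (a :: r) = [a] :: (b :: f) :: fs := by
  rw [decFactors, h]; simp [hba]

lemma decFactors_cons_nil {a : ℕ} {r : List ℕ} (h : decFactors r = []) :
    decFactors (a :: r) = [[a]] := by
  rw [decFactors, h]

lemma decFactors_chain' {w : List ℕ} :
    ∀ c ∈ decFactors w, c.IsChain (fun x y => y < x) := by
  induction w with
  | nil => simp [decFactors]
  | cons a rest ih =>
    rcases h : decFactors rest with _ | ⟨c, fs⟩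
    · rw [decFactors_cons_nil h]; simp
    · rcases c with _ | ⟨b, f⟩
      · exact absurd rfl (decFactors_ne_nil _ (h ▸ List.mem_cons_self))
      · by_cases hba : b < a
        · rw [decFactors_cons_lt h hba]
          intro c hc
          rcases List.mem_cons.1 hc with hc | hc
          · subst hc
            exact List.isChain_cons_cons.2 ⟨hba, ih _ (by rw [h]; simp)⟩
          · exact ih _ (by rw [h]; exact List.mem_cons_of_mem _ hc)
        · rw [decFactors_cons_ge h hba]
          intro c hc
          rcases List.mem_cons.1 hc with hc | hc
          · subst hc; simp
          · exact ih _ (by rw [h]; exact hc)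

lemma decFactors_col_append {c : List ℕ} (r : List ℕ) (hc : c ≠ [])
    (hdec : c.IsChain (fun x y => y < x))
    (hbr : ∀ b ∈ r.head?, ¬ b < c.getLastD 0) :
    decFactors (c ++ r) = c :: decFactors r := by
  induction c with
  | nil => exact absurd rfl hc
  | cons a c' ih =>
    rcases c' with _ | ⟨b, c''⟩
    · -- c = [a]
      rcases r with _ | ⟨x, r'⟩
      · simp [decFactors]
      · obtain ⟨s, ss, hss⟩ := decFactors_head x r'
        have hx : ¬ x < a := by simpa using hbr x rfl
        rw [List.singleton_append, decFactors_cons_ge hss hx, ← hss]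
    · have ih' : decFactors (b :: c'' ++ r) = (b :: c'') :: decFactors r :=
        ih (by simp) (List.isChain_cons_cons.1 hdec).2 (by simpa using hbr)
      have hba : b < a := (List.isChain_cons_cons.1 hdec).1
      have := decFactors_cons_lt (show decFactors (b :: (c'' ++ r)) = (b :: c'') :: decFactors r by simpa using ih') hba
      simpa using this

lemma rowLengths_pos : ∀ (D : List ℕ), ∀ x ∈ rowLengths D, 0 < x := by
  intro D
  match D with
  | [] => simp [rowLengths]
  | [d] => intro x hx; rw [rowLengths] at hx; simp [List.eq_of_mem_replicate hx]
  | d :: e :: rest =>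
    intro x hx
    rw [rowLengths] at hx
    rcases List.mem_append.1 hx with hx | hx
    · simp [List.eq_of_mem_replicate hx]
    · rcases h : rowLengths (e :: rest) with _ | ⟨r, rs⟩
      · rw [h] at hx; simp_all
      · rw [h] at hx
        rcases List.mem_cons.1 hx with hx | hx
        · omega
        · exact rowLengths_pos (e :: rest) x (by rw [h]; exact List.mem_cons_of_mem _ hx)

lemma rowLengths_ne_nil : ∀ (D : List ℕ), D ≠ [] → (∀ d ∈ D, 0 < d) → rowLengths D ≠ [] := by
  intro D
  match D with
  | [] => simp
  | [d] => intro _ h; simp [rowLengths]; have := h d (by simp); omega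
  | d :: e :: rest =>
    intro _ h
    rw [rowLengths]
    rcases hh : rowLengths (e :: rest) with _ | ⟨r, rs⟩ <;> simp

lemma rowLengths_sum : ∀ (D : List ℕ), (∀ d ∈ D, 0 < d) → (rowLengths D).sum = D.sum := by
  intro D
  match D with
  | [] => simp [rowLengths]
  | [d] => intro h; simp [rowLengths]
  | d :: e :: rest =>
    intro h
    rw [rowLengths]
    rcases hh : rowLengths (e :: rest) with _ | ⟨r, rs⟩
    · exact absurd hh (rowLengths_ne_nil _ (by simp) (fun x hx => h x (by simp [hx])))
    · have ih := rowLengths_sum (e :: rest) (fun x hx => h x (by simp [hx]))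
      rw [hh] at ih
      have hd := h d (by simp)
      simp only [List.sum_append, List.sum_replicate, List.sum_cons, smul_eq_mul, mul_one] at *
      omega

lemma rowLengths_length : ∀ (D : List ℕ), D ≠ [] → (∀ d ∈ D, 0 < d) →
    (rowLengths D).length + D.length = D.sum + 1 := by
  intro D
  match D with
  | [] => simp
  | [d] => intro _ h; simp [rowLengths]
  | d :: e :: rest =>
    intro _ h
    rw [rowLengths]
    rcases hh : rowLengths (e :: rest) with _ | ⟨r, rs⟩
    · exact absurd hh (rowLengths_ne_nil _ (by simp) (fun x hx => h x (by simp [hx])))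
    · have ih := rowLengths_length (e :: rest) (by simp) (fun x hx => h x (by simp [hx]))
      rw [hh] at ih
      have hd := h d (by simp)
      simp only [List.length_append, List.length_replicate, List.length_cons, List.sum_cons] at *
      omega

lemma rowLengths_one_cons (e : ℕ) (rest : List ℕ) :
    rowLengths (1 :: e :: rest) =
      (match rowLengths (e :: rest) with
       | [] => [1]
       | r :: rs => (r + 1) :: rs) := by
  rw [rowLengths]; simp

lemma rowLengths_succ_cons {a : ℕ} (ha : 1 ≤ a) (t : List ℕ) :
    rowLengths ((a + 1) :: t) = 1 :: rowLengths (a :: t) := by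
  rcases t with _ | ⟨e, rest⟩
  · rw [rowLengths, rowLengths]; simp [List.replicate_succ]
  · rw [rowLengths, rowLengths]
    simp only [Nat.add_sub_cancel]
    rw [show a = (a - 1) + 1 by omega, List.replicate_succ]
    simp

lemma rowLengths_replicate_one : ∀ c : ℕ, rowLengths (List.replicate (c+1) 1) = [c+1] := by
  intro c
  induction c with
  | zero => rfl
  | succ c ih =>
    rw [List.replicate_succ, show List.replicate (c+1) 1 = 1 :: List.replicate c 1 from
      List.replicate_succ (a := 1) (n := c), rowLengths_one_cons,
      show (1 : ℕ) :: List.replicate c 1 = List.replicate (c+1) 1 from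
      (List.replicate_succ (a := 1) (n := c)).symm, ih]

lemma rowLengths_rowLengths (D : List ℕ) (hpos : ∀ d ∈ D, 0 < d) :
    rowLengths (rowLengths D) = D := by
  suffices H : ∀ n (D : List ℕ), D.sum ≤ n → (∀ d ∈ D, 0 < d) →
      rowLengths (rowLengths D) = D from H D.sum D le_rfl hpos
  clear hpos D
  intro n
  induction n with
  | zero =>
    intro D hs hpos
    have hD : D = [] := by
      cases D with
      | nil => rfl
      | cons a t => exfalso; have := hpos a (by simp); simp at hs; omega
    subst hD; rfl
  | succ n ih =>
    intro D hs hpos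
    match D with
    | [] => rfl
    | [a] =>
      have ha := hpos a (by simp)
      obtain ⟨c, rfl⟩ : ∃ c, a = c + 1 := ⟨a - 1, by omega⟩
      rw [show rowLengths [c+1] = List.replicate (c+1) 1 by rw [rowLengths],
        rowLengths_replicate_one]
    | a :: e :: rest =>
      have ha := hpos a (by simp)
      have hpos' : ∀ d ∈ e :: rest, 0 < d := fun x hx => hpos x (by simp [hx])
      have hsum : (e :: rest).sum ≤ n := by simp [List.sum_cons] at hs ⊢; omega
      rcases Nat.lt_or_ge a 2 with h2 | h2
      · have h1 : a = 1 := by omega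
        subst h1
        rcases hh : rowLengths (e :: rest) with _ | ⟨r, rs⟩
        · exact absurd hh (rowLengths_ne_nil _ (by simp) hpos')
        · rw [rowLengths_one_cons, hh]
          have hr : 0 < r := rowLengths_pos (e :: rest) r (hh ▸ List.mem_cons_self)
          show rowLengths ((r + 1) :: rs) = 1 :: e :: rest
          rw [rowLengths_succ_cons hr rs, ← hh, ih (e :: rest) hsum hpos']
      · obtain ⟨b, rfl⟩ : ∃ b, a = b + 1 := ⟨a - 1, by omega⟩
        have hb : 1 ≤ b := by omega
        have hposb : ∀ d ∈ b :: e :: rest, 0 < d := by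
          intro x hx; rcases List.mem_cons.1 hx with rfl | hx
          · omega
          · exact hpos' x hx
        have key := ih (b :: e :: rest) (by simp [List.sum_cons] at hs ⊢; omega) hposb
        rcases hh : rowLengths (b :: e :: rest) with _ | ⟨r, rs⟩
        · exact absurd hh (rowLengths_ne_nil _ (by simp) hposb)
        · rw [hh] at key
          rw [show rowLengths ((b+1) :: e :: rest) = 1 :: rowLengths (b :: e :: rest) from
            rowLengths_succ_cons hb _, hh, rowLengths_one_cons r rs, key]

def encCols : ℕ → List (List ℕ) → List ℕ
  | _, [] => []
  | i, c :: cs => c.reverse.map (· + i) ++ encCols (i+1) cs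

def decCols : ℕ → List ℕ → List ℕ → List (List ℕ)
  | _, [], _ => []
  | i, d :: t, y => ((y.take d).map (· - i)).reverse :: decCols (i+1) t (y.drop d)

lemma encCols_length : ∀ (L : List (List ℕ)) (i), (encCols i L).length = (L.map List.length).sum := by
  intro L
  induction L with
  | nil => intro i; rfl
  | cons c cs ih => intro i; simp [encCols, ih (i+1)]

lemma decCols_encCols : ∀ (L : List (List ℕ)) (i),
    decCols i (L.map List.length) (encCols i L) = L := by
  intro L
  induction L with
  | nil => intro i; rfl
  | cons c cs ih =>
    intro i
    rw [List.map_cons, encCols, decCols,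
      List.take_left' (by simp), List.drop_left' (by simp), ih (i+1)]
    congr 1
    rw [List.map_map]
    have : ((fun x => x - i) ∘ fun x => x + i) = id := by
      funext a; simp
    rw [this, List.map_id, List.reverse_reverse]

lemma getLastD_le_headD : ∀ (c : List ℕ), c.IsChain (fun x y => y < x) →
    c.getLastD 0 ≤ c.headD 0 := by
  intro c
  match c with
  | [] => simp
  | [a] => simp
  | a :: b :: t =>
    intro h
    have h1 := List.isChain_cons_cons.1 h
    have ih := getLastD_le_headD (b :: t) h1.2
    simp only [List.getLastD_eq_getLast?, List.getLast?_cons_cons] at ih ⊢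
    simp only [List.headD_eq_head?_getD, List.head?_cons, Option.getD_some] at ih ⊢
    omega

lemma boundary_chain : ∀ (L : List (List ℕ)),
    (∀ c ∈ L, c.IsChain (fun x y => y < x)) →
    L.IsChain (fun c d => c.headD 0 ≤ d.getLastD 0) →
    L.IsChain (fun c d => c.getLastD 0 ≤ d.headD 0) := by
  intro L
  induction L with
  | nil => simp
  | cons c cs ih =>
    intro hdec hqr
    rw [List.isChain_cons] at hqr ⊢
    refine ⟨?_, ih (fun x hx => hdec x (List.mem_cons_of_mem _ hx)) hqr.2⟩
    intro d hd
    have hdmem : d ∈ cs := List.mem_of_mem_head? hd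
    calc c.getLastD 0 ≤ c.headD 0 := getLastD_le_headD c (hdec c (List.mem_cons_self))
      _ ≤ d.getLastD 0 := hqr.1 d hd
      _ ≤ d.headD 0 := getLastD_le_headD d (hdec d (List.mem_cons_of_mem _ hdmem))

lemma encCols_chain' : ∀ (L : List (List ℕ)) (i), (∀ c ∈ L, c ≠ []) →
    (∀ c ∈ L, c.IsChain (fun x y => y < x)) →
    L.IsChain (fun c d => c.headD 0 ≤ d.getLastD 0) →
    (encCols i L).IsChain (· < ·) := by
  intro L
  induction L with
  | nil => intro i _ _ _; simp [encCols]
  | cons c cs ih =>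
    intro i hne hdec hqr
    rw [encCols, List.isChain_append]
    refine ⟨?_, ih (i+1) (fun x hx => hne x (List.mem_cons_of_mem _ hx))
      (fun x hx => hdec x (List.mem_cons_of_mem _ hx)) (List.isChain_cons.1 hqr).2, ?_⟩
    · rw [List.isChain_map]
      have : List.IsChain (· < ·) c.reverse := by
        rw [List.isChain_reverse]
        exact hdec c (List.mem_cons_self)
      exact this.imp (fun a b hab => by omega)
    · intro x hx y hy
      rcases cs with _ | ⟨d, cs'⟩
      · simp [encCols] at hy
      · have hd : d ≠ [] := hne d (by simp)
        have hc : c ≠ [] := hne c (by simp)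
        rw [encCols] at hy
        rw [List.getLast?_map, List.getLast?_reverse] at hx
        rw [List.head?_append, List.head?_map, List.head?_reverse] at hy
        obtain ⟨hc0, hhc, rfl⟩ : ∃ a, c.head? = some a ∧ a + i = x := by
          rcases Option.map_eq_some_iff.1 hx with ⟨a, ha1, ha2⟩; exact ⟨a, ha1, ha2⟩
        have hdl : ∃ b, d.getLast? = some b := Option.ne_none_iff_exists'.1 (by
          simp [List.getLast?_eq_none_iff, hd])
        obtain ⟨b, hb⟩ := hdl
        rw [hb] at hy
        simp only [Option.map_some, Option.or_some] at hy
        have hyeq : y = b + (i + 1) := by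
          simpa using hy.symm
        subst hyeq
        have hch := (List.isChain_cons.1 hqr).1 d (by simp)
        have h1 : c.headD 0 = hc0 := by simp [List.headD_eq_head?_getD, hhc]
        have h2 : d.getLastD 0 = b := by simp [List.getLastD_eq_getLast?, hb]
        have := hch
        rw [h1, h2] at this
        omega

lemma encCols_bounds (n : ℕ) : ∀ (L : List (List ℕ)) (i),
    (∀ a ∈ L.flatten, 1 ≤ a ∧ a ≤ n) →
    ∀ x ∈ encCols i L, i + 1 ≤ x ∧ x ≤ n + i + L.length - 1 := by
  intro L
  induction L with
  | nil => intro i _ x hx; simp [encCols] at hx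
  | cons c cs ih =>
    intro i hb x hx
    rw [encCols] at hx
    rcases List.mem_append.1 hx with hx | hx
    · obtain ⟨a, ha, rfl⟩ := List.mem_map.1 hx
      have := hb a (by simp [List.mem_reverse.1 ha])
      simp only [List.length_cons]
      omega
    · have := ih (i+1) (fun a ha => hb a (by simp at ha ⊢; exact Or.inr ha)) x hx
      simp only [List.length_cons]
      omega

lemma decCols_spec (n : ℕ) : ∀ (D : List ℕ) (i : ℕ) (y : List ℕ),
    (∀ d ∈ D, 0 < d) → y.Pairwise (· < ·) → y.length = D.sum →
    (∀ a ∈ y, i + 1 ≤ a ∧ a ≤ n + i + D.length - 1) →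
    ((decCols i D y).map List.length = D ∧
     (∀ c ∈ decCols i D y, c ≠ []) ∧
     (∀ c ∈ decCols i D y, c.IsChain (fun x y => y < x)) ∧
     (decCols i D y).IsChain (fun c d => c.headD 0 ≤ d.getLastD 0) ∧
     (∀ a ∈ (decCols i D y).flatten, 1 ≤ a ∧ a ≤ n) ∧
     encCols i (decCols i D y) = y) := by
  intro D
  induction D with
  | nil =>
    intro i y _ _ hlen _
    have hy : y = [] := List.eq_nil_of_length_eq_zero (by simpa using hlen)
    subst hy
    exact ⟨rfl, by simp [decCols], by simp [decCols], by simp [decCols], by simp [decCols],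
      by simp [decCols, encCols]⟩
  | cons d t ih =>
    intro i y hpos hpw hlen hbd
    have hd : 0 < d := hpos d (by simp)
    have hsum : y.length = d + t.sum := by simpa [List.sum_cons] using hlen
    have hly : d ≤ y.length := by omega
    have hlc : (y.take d).length = d := by rw [List.length_take]; omega
    have hly' : (y.drop d).length = t.sum := by rw [List.length_drop]; omega
    obtain ⟨pw1, pw2, hcross⟩ := List.pairwise_append.1
      (show (y.take d ++ y.drop d).Pairwise (· < ·) by rw [List.take_append_drop]; exact hpw)
    have hc1ne : y.take d ≠ [] := by
      intro h; rw [h] at hlc; simp at hlc; omega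
    obtain ⟨b₁, cb, hcb⟩ := List.exists_cons_of_ne_nil hc1ne
    have hb₁mem : b₁ ∈ y.take d := by rw [hcb]; simp
    have hb₁y : b₁ ∈ y := List.mem_of_mem_take hb₁mem
    -- lower bounds for the drop
    have hlow' : ∀ a ∈ y.drop d, i + 2 ≤ a := by
      intro a ha
      have h1 := hcross b₁ hb₁mem a ha
      have h2 := (hbd b₁ hb₁y).1
      omega
    have hbd' : ∀ a ∈ y.drop d, (i+1) + 1 ≤ a ∧ a ≤ n + (i+1) + t.length - 1 := by
      intro a ha
      have h1 := hlow' a ha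
      have h2 := (hbd a (List.mem_of_mem_drop ha)).2
      simp only [List.length_cons] at h2
      omega
    have hpos' : ∀ x ∈ t, 0 < x := fun x hx => hpos x (by simp [hx])
    obtain ⟨ih1, ih2, ih3, ih4, ih5, ih6⟩ := ih (i+1) (y.drop d) hpos' pw2 hly' hbd'
    -- upper bound for take entries
    have hupper : ∀ a ∈ y.take d, a ≤ n + i := by
      rcases t with _ | ⟨d', t'⟩
      · intro a ha
        have := (hbd a (List.mem_of_mem_take ha)).2
        simp at this
        omega
      · have hd' : 0 < d' := hpos' d' (by simp)
        have hy'ne : y.drop d ≠ [] := by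
          intro h; rw [h] at hly'; simp [List.sum_cons] at hly'; omega
        obtain ⟨b, yt, hbyt⟩ := List.exists_cons_of_ne_nil hy'ne
        have hbmem : b ∈ y.drop d := by rw [hbyt]; simp
        have hbflat : b - (i+1) ∈ (decCols (i+1) (d' :: t') (y.drop d)).flatten := by
          rw [decCols]
          simp only [List.flatten_cons, List.mem_append]
          left
          rw [List.mem_reverse, List.mem_map]
          refine ⟨b, ?_, rfl⟩
          rw [hbyt]
          obtain ⟨k, rfl⟩ : ∃ k, d' = k + 1 := ⟨d' - 1, by omega⟩
          simp [List.take_succ_cons]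
        have hb5 := (ih5 _ hbflat).2
        have hbl := hlow' b hbmem
        have hble : b ≤ n + i + 1 := by omega
        intro a ha
        have := hcross a ha b hbmem
        omega
    refine ⟨?_, ?_, ?_, ?_, ?_, ?_⟩
    · rw [decCols, List.map_cons, ih1]
      simp only [List.length_reverse, List.length_map, List.length_take, List.cons.injEq,
        inf_eq_left, and_true]
      exact hly
    · rw [decCols]
      intro c hc
      rcases List.mem_cons.1 hc with rfl | hc
      · simp only [ne_eq, List.reverse_eq_nil_iff, List.map_eq_nil_iff]
        exact hc1ne
      · exact ih2 c hc
    · rw [decCols]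
      intro c hc
      rcases List.mem_cons.1 hc with rfl | hc
      · rw [List.isChain_reverse]
        rw [List.isChain_map]
        refine List.Pairwise.isChain (pw1.imp_of_mem ?_)
        intro a b ha hb hab
        have h1 := (hbd a (List.mem_of_mem_take ha)).1
        show a - i < b - i
        omega
      · exact ih3 c hc
    · rw [decCols, List.isChain_cons]
      refine ⟨?_, ih4⟩
      intro c' hc'
      rcases t with _ | ⟨d', t'⟩
      · simp [decCols] at hc'
      · rw [decCols] at hc'
        simp only [List.head?_cons, Option.mem_def, Option.some.injEq] at hc'
        subst hc'
        have hd' : 0 < d' := hpos' d' (by simp)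
        have hy'ne : y.drop d ≠ [] := by
          intro h; rw [h] at hly'; simp [List.sum_cons] at hly'; omega
        obtain ⟨b, yt, hbyt⟩ := List.exists_cons_of_ne_nil hy'ne
        have hbmem : b ∈ y.drop d := by rw [hbyt]; simp
        obtain ⟨lc, hlcc⟩ : ∃ x, (y.take d).getLast? = some x := by
          rcases h : (y.take d).getLast? with _ | x
          · exact absurd (List.getLast?_eq_none_iff.1 h) hc1ne
          · exact ⟨x, rfl⟩
        have hlcmem : lc ∈ y.take d := List.mem_of_mem_getLast? (by rw [hlcc]; rfl)
        have h1 : (((y.take d).map (· - i)).reverse).headD 0 = lc - i := by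
          rw [List.headD_eq_head?_getD, List.head?_reverse, List.getLast?_map, hlcc]
          rfl
        have h2 : ((((y.drop d).take d').map (· - (i+1))).reverse).getLastD 0 = b - (i+1) := by
          rw [List.getLastD_eq_getLast?, List.getLast?_reverse, List.head?_map, hbyt]
          obtain ⟨k, rfl⟩ : ∃ k, d' = k + 1 := ⟨d' - 1, by omega⟩
          rw [List.take_succ_cons]
          rfl
        rw [h1, h2]
        have h3 := hcross lc hlcmem b hbmem
        have h4 := (hbd lc (List.mem_of_mem_take hlcmem)).1
        omega
    · rw [decCols, List.flatten_cons]
      intro a ha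
      rcases List.mem_append.1 ha with ha | ha
      · rw [List.mem_reverse, List.mem_map] at ha
        obtain ⟨x, hx, rfl⟩ := ha
        have h1 := (hbd x (List.mem_of_mem_take hx)).1
        have h2 := hupper x hx
        omega
      · exact ih5 a ha
    · rw [decCols, encCols, List.reverse_reverse, List.map_map, ih6]
      have : List.map ((· + i) ∘ (· - i)) (y.take d) = y.take d := by
        refine List.map_congr_left ?_ |>.trans (List.map_id _)
        intro x hx
        have := (hbd x (List.mem_of_mem_take hx)).1
        simp only [Function.comp_apply, id]
        omega
      rw [this, List.take_append_drop]

lemma decFactors_flatten (L : List (List ℕ)) (h1 : ∀ c ∈ L, c ≠ [])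
    (h2 : ∀ c ∈ L, c.IsChain (fun x y => y < x))
    (h3 : L.IsChain (fun c d => c.getLastD 0 ≤ d.headD 0)) :
    decFactors L.flatten = L := by
  induction L with
  | nil => rfl
  | cons c cs ih =>
    rw [List.flatten_cons]
    rw [decFactors_col_append cs.flatten (h1 c (by simp)) (h2 c (by simp)) ?_,
      ih (fun x hx => h1 x (by simp [hx])) (fun x hx => h2 x (by simp [hx]))
        (List.isChain_cons.1 h3).2]
    intro b hb
    rcases cs with _ | ⟨d, cs'⟩
    · simp at hb
    · have hdne : d ≠ [] := h1 d (by simp)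
      rw [List.flatten_cons, List.head?_append] at hb
      obtain ⟨b', d', hb'⟩ := List.exists_cons_of_ne_nil hdne
      rw [hb'] at hb
      simp only [List.head?_cons, Option.or_some, Option.some_or, Option.mem_def, Option.some.injEq] at hb
      subst hb
      have := (List.isChain_cons.1 h3).1 d (by simp)
      rw [hb'] at this
      simp only [List.headD_eq_head?_getD, List.head?_cons, Option.getD_some] at this
      omega

lemma ncard_sorted_lists (N m : ℕ) :
    {y : List ℕ | y.Pairwise (· < ·) ∧ y.length = m ∧ ∀ a ∈ y, 1 ≤ a ∧ a ≤ N}.ncard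
      = N.choose m := by
  classical
  set T : Set (List ℕ) :=
    {y : List ℕ | y.Pairwise (· < ·) ∧ y.length = m ∧ ∀ a ∈ y, 1 ≤ a ∧ a ≤ N} with hT
  set F := Finset.powersetCard m (Finset.Icc 1 N) with hF
  haveI : IsAntisymm ℕ (· < ·) := ⟨fun a b h h' => ((lt_asymm h) h').elim⟩
  have hinj : Set.InjOn List.toFinset T := by
    intro y1 h1 y2 h2 he
    have nd1 : y1.Nodup := h1.1.imp fun h => ne_of_lt h
    have nd2 : y2.Nodup := h2.1.imp fun h => ne_of_lt h
    exact List.Perm.eq_of_pairwise' h1.1 h2.1 (List.perm_of_nodup_nodup_toFinset_eq nd1 nd2 he)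
  have himg : List.toFinset '' T = ↑F := by
    ext s
    constructor
    · rintro ⟨y, hy, rfl⟩
      rw [Finset.mem_coe, Finset.mem_powersetCard]
      refine ⟨?_, ?_⟩
      · intro a ha
        rw [List.mem_toFinset] at ha
        exact Finset.mem_Icc.2 (hy.2.2 a ha)
      · have nd : y.Nodup := hy.1.imp fun h => ne_of_lt h
        rw [List.toFinset_card_of_nodup nd, hy.2.1]
    · intro hs
      rw [Finset.mem_coe, Finset.mem_powersetCard] at hs
      refine ⟨Finset.sort s (· ≤ ·), ⟨(Finset.sortedLT_sort s).pairwise, ?_, ?_⟩, Finset.sort_toFinset _ _⟩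
      · rw [Finset.length_sort, hs.2]
      · intro a ha
        rw [Finset.mem_sort] at ha
        exact Finset.mem_Icc.1 (hs.1 ha)
  calc T.ncard = (List.toFinset '' T).ncard := (Set.ncard_image_of_injOn hinj).symm
    _ = F.card := by rw [himg, Set.ncard_coe_finset]
    _ = N.choose m := by rw [hF, Finset.card_powersetCard, Nat.card_Icc, Nat.add_sub_cancel]

lemma length_le_sum_of_pos : ∀ (α : List ℕ), (∀ a ∈ α, 0 < a) → α.length ≤ α.sum := by
  intro α
  induction α with
  | nil => simp
  | cons a t ih =>
    intro h
    have := h a (by simp)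
    have := ih (fun x hx => h x (by simp [hx]))
    simp only [List.length_cons, List.sum_cons]
    omega

/-- For a composition `α`, the number of quasi-ribbon words of shape
`α` in `𝒜_n^*` (equivalently, of quasi-ribbon tableaux of shape `α` with entries in
`𝒜_n`) equals `C(n + |α| − ℓ(α), n − ℓ(α))` if `ℓ(α) ≤ n`, and `0` if `ℓ(α) > n`. -/
theorem count_quasiRibbon_words (n : ℕ) (α : List ℕ) (hpos : ∀ a ∈ α, 0 < a) :
    {w : List ℕ | IsWord n w ∧ IsQRWord w ∧ shape w = α}.ncard =
      if α.length ≤ n then (n + α.sum - α.length).choose (n - α.length) else 0 := by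
  classical
  rcases eq_or_ne α [] with rfl | hne
  · have hset : {w : List ℕ | IsWord n w ∧ IsQRWord w ∧ shape w = []} = {([] : List ℕ)} := by
      ext w
      simp only [Set.mem_setOf_eq, Set.mem_singleton_iff]
      constructor
      · rintro ⟨_, _, h3⟩
        by_contra hw
        have hdf : (decFactors w).map List.length ≠ [] := by
          simp only [ne_eq, List.map_eq_nil_iff]
          intro h
          have := flatten_decFactors w
          rw [h] at this
          exact hw this.symm
        have hposl : ∀ x ∈ (decFactors w).map List.length, 0 < x := by
          intro x hx
          obtain ⟨c, hc, rfl⟩ := List.mem_map.1 hx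
          exact List.length_pos_iff.2 (decFactors_ne_nil c hc)
        simp only [shape] at h3
        exact rowLengths_ne_nil _ hdf hposl h3
      · rintro rfl
        refine ⟨by intro a ha; simp at ha, ?_, ?_⟩
        · show (decFactors []).Chain' _
          simp [decFactors, List.Chain']
        · show rowLengths ((decFactors []).map List.length) = []
          simp [decFactors, rowLengths]
    rw [hset]
    simp only [List.length_nil, Nat.zero_le, if_pos, List.sum_nil, Nat.add_zero, Nat.sub_zero]
    rw [Set.ncard_singleton, Nat.choose_self]
  · set ℓ := α.length with hl
    set m := α.sum with hm
    have hml : ℓ ≤ m := length_le_sum_of_pos α hpos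
    have hl1 : 1 ≤ ℓ := by rw [hl]; exact List.length_pos_iff.2 hne
    set D := rowLengths α with hD
    have hDpos : ∀ d ∈ D, 0 < d := rowLengths_pos α
    have hDne : D ≠ [] := rowLengths_ne_nil α hne hpos
    have hDsum : D.sum = m := rowLengths_sum α hpos
    have hDlen : D.length + ℓ = m + 1 := rowLengths_length α hne hpos
    set k := D.length with hk
    have hk1 : 1 ≤ k := by rw [hk]; exact List.length_pos_iff.2 hDne
    set N := n + k - 1 with hN
    have hheights : ∀ w : List ℕ, shape w = α → (decFactors w).map List.length = D := by
      intro w hsh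
      simp only [shape] at hsh
      have hposl : ∀ x ∈ (decFactors w).map List.length, 0 < x := by
        intro x hx
        obtain ⟨c, hc, rfl⟩ := List.mem_map.1 hx
        exact List.length_pos_iff.2 (decFactors_ne_nil c hc)
      have h2 := rowLengths_rowLengths _ hposl
      rw [hsh] at h2
      rw [hD, ← h2]
    have himg : (fun w => encCols 0 (decFactors w)) ''
        {w : List ℕ | IsWord n w ∧ IsQRWord w ∧ shape w = α} =
        {y : List ℕ | y.Pairwise (· < ·) ∧ y.length = m ∧ ∀ a ∈ y, 1 ≤ a ∧ a ≤ N} := by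
      ext y
      constructor
      · rintro ⟨w, ⟨hw1, hw2, hw3⟩, rfl⟩
        have hH := hheights w hw3
        have hLne := @decFactors_ne_nil w
        have hLdec := @decFactors_chain' w
        have hqr : (decFactors w).Chain' (fun c d => c.headD 0 ≤ d.getLastD 0) := hw2
        have hwlen : (decFactors w).length = k := by
          rw [hk, ← hH, List.length_map]
        refine ⟨?_, ?_, ?_⟩
        · exact List.isChain_iff_pairwise.1 (encCols_chain' _ 0 hLne hLdec hqr)
        · rw [encCols_length, hH, hDsum]
        · intro a ha
          have hb := encCols_bounds n (decFactors w) 0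
            (by rw [flatten_decFactors]; exact hw1) a ha
          rw [hwlen] at hb
          omega
      · rintro ⟨hy1, hy2, hy3⟩
        obtain ⟨s1, s2, s3, s4, s5, s6⟩ := decCols_spec n D 0 y hDpos hy1
          (by rw [hy2, hDsum])
          (by intro a ha; have := hy3 a ha; omega)
        have hLrec : decFactors (decCols 0 D y).flatten = decCols 0 D y :=
          decFactors_flatten _ s2 s3 (boundary_chain _ s3 s4)
        refine ⟨(decCols 0 D y).flatten, ⟨?_, ?_, ?_⟩, ?_⟩
        · intro a ha
          exact s5 a ha
        · show (decFactors _).Chain' _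
          rw [hLrec]
          exact s4
        · show rowLengths ((decFactors _).map List.length) = α
          rw [hLrec, s1, hD, rowLengths_rowLengths α hpos]
        · show encCols 0 (decFactors _) = y
          rw [hLrec]
          exact s6
    have hinj : Set.InjOn (fun w => encCols 0 (decFactors w))
        {w : List ℕ | IsWord n w ∧ IsQRWord w ∧ shape w = α} := by
      intro w1 h1 w2 h2 he
      have hH1 := hheights w1 h1.2.2
      have hH2 := hheights w2 h2.2.2
      have e1 : (decCols 0 D (encCols 0 (decFactors w1))).flatten = w1 := by
        rw [← hH1, decCols_encCols, flatten_decFactors]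
      have e2 : (decCols 0 D (encCols 0 (decFactors w2))).flatten = w2 := by
        rw [← hH2, decCols_encCols, flatten_decFactors]
      simp only at he
      rw [← e1, ← e2, he]
    have key : {w : List ℕ | IsWord n w ∧ IsQRWord w ∧ shape w = α}.ncard = N.choose m := by
      rw [← Set.ncard_image_of_injOn hinj, himg, ncard_sorted_lists]
    rw [key]
    by_cases hln : ℓ ≤ n
    · rw [if_pos hln, show n + m - ℓ = N by omega, show n - ℓ = N - m by omega]
      exact (Nat.choose_symm (show m ≤ N by omega)).symm
    · rw [if_neg hln]
      exact Nat.choose_eq_zero_of_lt (by omega)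


end HypoCrystal
end

section
/- Let u ∈ 𝒜_n^* and i ∈ {1,...,n−1}. If the Kashiwara operator ẽ_i is defined on u, then the sequence of lengths of the maximal strictly decreasing factors of ẽ_i(u) equals the sequence of lengths of the maximal strictly decreasing factors of u; likewise, if f̃_i is defined on u, then the sequence of lengths of the maximal strictly decreasing factors of f̃_i(u) equals that of u. (Equivalently, the Kashiwara operators preserve the shape of the associated quasi-ribbon tabloid.) -/
namespace HypoCrystal

/-! ### Auxiliary lemmas about `reduce` -/

open List (Sublist)
open scoped List  -- for the `<+` notation

/-- One step of the reduction: prepend `x` onto an already reduced list. -/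
def step (x : ℕ × Bool) (r : List (ℕ × Bool)) : List (ℕ × Bool) :=
  match r with
  | y :: r' => if x.2 = false ∧ y.2 = true then r' else x :: y :: r'
  | [] => [x]

lemma reduce_cons (x : ℕ × Bool) (rest : List (ℕ × Bool)) :
    reduce (x :: rest) = step x (reduce rest) := rfl

lemma step_cons (x y : ℕ × Bool) (r : List (ℕ × Bool)) :
    step x (y :: r) = if x.2 = false ∧ y.2 = true then r else x :: y :: r := rfl

lemma step_nil (x : ℕ × Bool) : step x [] = [x] := rfl

lemma step_true {x : ℕ × Bool} (h : x.2 = true) (r : List (ℕ × Bool)) :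
    step x r = x :: r := by
  cases r with
  | nil => rfl
  | cons y r' => rw [step_cons, if_neg]; simp [h]

lemma step_false_cons_true {x y : ℕ × Bool} (h : x.2 = false) (h2 : y.2 = true)
    (r : List (ℕ × Bool)) : step x (y :: r) = r := by
  rw [step_cons, if_pos ⟨h, h2⟩]

lemma step_cons_false {y : ℕ × Bool} (h2 : y.2 = false) (x : ℕ × Bool)
    (r : List (ℕ × Bool)) : step x (y :: r) = x :: y :: r := by
  rw [step_cons, if_neg]; simp [h2]

lemma step_sublist (x : ℕ × Bool) (r : List (ℕ × Bool)) : step x r <+ x :: r := by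
  cases r with
  | nil => simp [step_nil]
  | cons y r' =>
    rw [step_cons]
    split
    · exact ((List.Sublist.refl r').cons y).cons x
    · exact List.Sublist.refl _

lemma reduce_append (a b : List (ℕ × Bool)) :
    reduce (a ++ b) = a.foldr step (reduce b) := by
  induction a with
  | nil => rfl
  | cons x a ih => rw [List.cons_append, reduce_cons, ih, List.foldr_cons]

lemma foldr_step_sublist (a r : List (ℕ × Bool)) : a.foldr step r <+ a ++ r := by
  induction a with
  | nil => exact List.Sublist.refl _
  | cons x a ih =>
    rw [List.foldr_cons, List.cons_append]
    exact (step_sublist x _).trans (ih.cons₂ x)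

lemma reduce_sublist (l : List (ℕ × Bool)) : reduce l <+ l := by
  induction l with
  | nil => exact List.Sublist.refl _
  | cons x rest ih =>
    rw [reduce_cons]
    exact (step_sublist x _).trans (ih.cons₂ x)

lemma reduce_shape (l : List (ℕ × Bool)) :
    ∃ p q, (reduce l).map Prod.snd = List.replicate p true ++ List.replicate q false := by
  induction l with
  | nil => exact ⟨0, 0, rfl⟩
  | cons x rest ih =>
    obtain ⟨p, q, hpq⟩ := ih
    rw [reduce_cons]
    cases hx : x.2 with
    | true =>
      exact ⟨p + 1, q, by rw [step_true hx]; simp [hpq, hx, List.replicate_succ]⟩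
    | false =>
      cases hr : reduce rest with
      | nil => exact ⟨0, 1, by rw [step_nil]; simp [hx]⟩
      | cons y r' =>
        rw [hr] at hpq
        cases hy : y.2 with
        | true =>
          rw [step_false_cons_true hx hy]
          cases p with
          | zero =>
            exfalso
            cases q with
            | zero => simp at hpq
            | succ q => simp [List.replicate_succ, hy] at hpq
          | succ p =>
            refine ⟨p, q, ?_⟩
            rw [List.replicate_succ] at hpq
            simp only [List.map_cons, List.cons_append, List.cons.injEq] at hpq
            exact hpq.2
        | false =>
          rw [step_cons_false hy]
          cases p with
          | succ p => simp [List.replicate_succ, hy] at hpq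
          | zero =>
            cases q with
            | zero => simp at hpq
            | succ q =>
              refine ⟨0, q + 2, ?_⟩
              simp only [List.replicate_zero, List.nil_append, List.map_cons] at hpq ⊢
              rw [List.replicate_succ] at hpq
              simp only [List.cons.injEq] at hpq
              rw [List.replicate_succ, List.replicate_succ]
              simp [hx, hy, hpq.2]

lemma allFalse_reduce_of_head {l : List (ℕ × Bool)}
    (h : ∀ y ∈ (reduce l).head?, Prod.snd y = false) :
    ∀ y ∈ reduce l, y.2 = false := by
  obtain ⟨p, q, hpq⟩ := reduce_shape l
  cases hl : reduce l with
  | nil => simp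
  | cons z r =>
    have hz : z.2 = false := h z (by rw [hl]; rfl)
    rw [hl] at hpq
    cases p with
    | succ p => simp [List.replicate_succ, hz] at hpq
    | zero =>
      intro y hy
      simp only [List.replicate_zero, List.nil_append] at hpq
      have : y.2 ∈ List.replicate q false := by
        rw [← hpq]
        exact List.mem_map_of_mem hy
      exact List.eq_of_mem_replicate this

lemma foldr_step_allFalse (a : List (ℕ × Bool)) {s : List (ℕ × Bool)}
    (hs : ∀ y ∈ s, Prod.snd y = false) :
    ∃ t, a.foldr step s = t ++ s ∧ t <+ a := by
  induction a with
  | nil => exact ⟨[], rfl, List.nil_sublist _⟩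
  | cons x a ih =>
    obtain ⟨t, ht, hsub⟩ := ih
    rw [List.foldr_cons, ht]
    cases t with
    | nil =>
      cases s with
      | nil => exact ⟨[x], by simp [step_nil], (List.nil_sublist a).cons₂ x⟩
      | cons z s' =>
        rw [List.nil_append, step_cons_false (hs z List.mem_cons_self)]
        exact ⟨[x], rfl, (List.nil_sublist a).cons₂ x⟩
    | cons h t' =>
      by_cases hc : x.2 = false ∧ h.2 = true
      · rw [List.cons_append, step_cons, if_pos hc]
        exact ⟨t', rfl, ((List.Sublist.refl t').cons h |>.trans hsub).cons x⟩
      · rw [List.cons_append, step_cons, if_neg hc]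
        exact ⟨x :: h :: t', by simp, hsub.cons₂ x⟩

lemma foldr_step_drop (a s : List (ℕ × Bool)) :
    ∃ t m, a.foldr step s = t ++ s.drop m ∧ t <+ a := by
  induction a with
  | nil => exact ⟨[], 0, by simp, List.nil_sublist _⟩
  | cons x a ih =>
    obtain ⟨t, m, ht, hsub⟩ := ih
    rw [List.foldr_cons, ht]
    cases t with
    | nil =>
      cases hd : s.drop m with
      | nil => exact ⟨[x], m, by rw [List.nil_append, hd, step_nil]; simp, (List.nil_sublist a).cons₂ x⟩
      | cons z s2 =>
        by_cases hc : x.2 = false ∧ z.2 = true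
        · refine ⟨[], m + 1, ?_, List.nil_sublist _⟩
          have h2 : List.drop (m + 1) s = s2 := by
            rw [← List.drop_drop, hd]
            simp
          simp only [List.nil_append]
          rw [step_cons, if_pos hc, h2]
        · refine ⟨[x], m, ?_, (List.nil_sublist a).cons₂ x⟩
          rw [hd, List.nil_append, step_cons, if_neg hc]
          simp
    | cons h t' =>
      by_cases hc : x.2 = false ∧ h.2 = true
      · rw [List.cons_append, step_cons, if_pos hc]
        exact ⟨t', m, rfl, ((List.Sublist.refl t').cons h |>.trans hsub).cons x⟩
      · rw [List.cons_append, step_cons, if_neg hc]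
        exact ⟨x :: h :: t', m, by simp, hsub.cons₂ x⟩

/-! ### Auxiliary lemmas about `signWord` -/

lemma pairwise_filterMap_lt {f : ℕ × ℕ → Option (ℕ × Bool)}
    (hfst : ∀ a x, f a = some x → x.1 = a.1) :
    ∀ {l : List (ℕ × ℕ)}, (l.Pairwise fun a b => a.1 < b.1) →
      (l.filterMap f).Pairwise fun x y => x.1 < y.1 := by
  intro l
  induction l with
  | nil => intro _; simp
  | cons a l ih =>
    intro he
    obtain ⟨h1, h2⟩ := List.pairwise_cons.mp he
    rw [List.filterMap_cons]
    cases hfa : f a with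
    | none => exact ih h2
    | some x =>
      refine List.pairwise_cons.mpr ⟨?_, ih h2⟩
      intro y hy
      obtain ⟨b, hb, hfb⟩ := List.mem_filterMap.mp hy
      rw [hfst a x hfa, hfst b y hfb]
      exact h1 b hb

lemma signWord_pairwise (i : ℕ) (u : List ℕ) :
    (signWord i u).Pairwise fun x y => x.1 < y.1 := by
  have he : (u.zipIdx.map Prod.swap).Pairwise fun a b : ℕ × ℕ => a.1 < b.1 := by
    have h1 : (List.range' 0 u.length).Pairwise (· < ·) := List.pairwise_lt_range'
    rw [← List.zipIdx_map_snd 0 u] at h1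
    rw [List.pairwise_map]
    exact List.pairwise_map.mp h1
  refine pairwise_filterMap_lt ?_ he
  intro a x h
  split at h
  · cases h; rfl
  · split at h
    · cases h; rfl
    · simp at h

lemma mem_signWord {i k : ℕ} {b : Bool} {u : List ℕ} :
    (k, b) ∈ signWord i u ↔ k < u.length ∧ u.getD k 0 = (if b then i else i + 1) := by
  unfold signWord
  rw [List.mem_filterMap]
  constructor
  · rintro ⟨⟨p, a⟩, hmem, hf⟩
    have hpa : u[p]? = some a := by
      obtain ⟨⟨a', p'⟩, hm, he⟩ := List.mem_map.mp hmem
      simp only [Prod.swap, Prod.mk.injEq] at he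
      obtain ⟨rfl, rfl⟩ := he
      exact List.mk_mem_zipIdx_iff_getElem?.mp hm
    have hplen : p < u.length := by
      by_contra h
      rw [List.getElem?_eq_none (by omega)] at hpa
      simp at hpa
    have hga : u.getD p 0 = a := by
      rw [List.getD_eq_getElem u 0 hplen]
      rw [List.getElem?_eq_getElem hplen] at hpa
      exact Option.some_injective _ hpa
    simp only at hf
    split at hf
    · rename_i hai
      cases hf
      refine ⟨hplen, ?_⟩
      rw [hga]
      simpa using hai
    · split at hf
      · rename_i hai
        cases hf
        refine ⟨hplen, ?_⟩
        rw [hga]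
        simpa using hai
      · simp at hf
  · rintro ⟨hlen, hval⟩
    refine ⟨(k, if b = true then i else i + 1), ?_, ?_⟩
    · refine List.mem_map.mpr ⟨(if b = true then i else i + 1, k), ?_, rfl⟩
      rw [List.mk_mem_zipIdx_iff_getElem?, List.getElem?_eq_getElem hlen]
      exact congrArg some (by rw [← List.getD_eq_getElem u 0 hlen, hval])
    · have hne : i + 1 ≠ i := by omega
      cases b with
      | true => simp
      | false => simp [hne]

lemma pairwise_split {l : List (ℕ × Bool)} (hl : l.Pairwise fun x y => x.1 < y.1)
    {k : ℕ} {b1 b2 : Bool} (h1 : (k, b1) ∈ l) (h2 : (k + 1, b2) ∈ l) :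
    ∃ A B, l = A ++ (k, b1) :: (k + 1, b2) :: B := by
  induction l with
  | nil => simp at h1
  | cons x l ih =>
    obtain ⟨hx, hl'⟩ := List.pairwise_cons.mp hl
    rcases List.mem_cons.mp h1 with h1' | h1'
    · subst h1'
      have h2' : (k + 1, b2) ∈ l := by
        rcases List.mem_cons.mp h2 with h | h
        · exfalso; have := congrArg Prod.fst h; simp at this
        · exact h
      cases l with
      | nil => simp at h2'
      | cons y l' =>
        rcases List.mem_cons.mp h2' with h | h
        · subst h
          exact ⟨[], l', rfl⟩
        · exfalso
          have hy1 : k < y.1 := hx y List.mem_cons_self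
          obtain ⟨hy2, _⟩ := List.pairwise_cons.mp hl'
          have := hy2 _ h
          simp at this
          omega
    · have hxk : x.1 < k := hx _ h1'
      have h2' : (k + 1, b2) ∈ l := by
        rcases List.mem_cons.mp h2 with h | h
        · exfalso; rw [← h] at hxk; simp at hxk
        · exact h
      obtain ⟨A, B, hAB⟩ := ih hl' h1' h2'
      exact ⟨x :: A, B, by rw [hAB]; rfl⟩

/-! ### Auxiliary lemmas about `decFactors` -/

lemma decFactors_cons_shape (x : ℕ) (r : List ℕ) :
    ∃ f fs, decFactors (x :: r) = (x :: f) :: fs := by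
  rw [decFactors]
  rcases h : decFactors r with _ | ⟨_ | ⟨b, f⟩, fs⟩
  · exact ⟨[], [], rfl⟩
  · exact ⟨[], [] :: fs, rfl⟩
  · dsimp only
    split
    · exact ⟨b :: f, fs, rfl⟩
    · exact ⟨[], (b :: f) :: fs, rfl⟩

lemma decFactors_cons_of_eq {r : List ℕ} {b : ℕ} {f : List ℕ} {fs : List (List ℕ)}
    (h : decFactors r = (b :: f) :: fs) (a : ℕ) :
    decFactors (a :: r) = if b < a then (a :: b :: f) :: fs else [a] :: (b :: f) :: fs := by
  rw [decFactors, h]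

lemma decFactors_cons_congr {r r' : List ℕ} {b : ℕ} {f : List ℕ} {fs : List (List ℕ)}
    {b' : ℕ} {f' : List ℕ} {fs' : List (List ℕ)} (a : ℕ)
    (h : decFactors r = (b :: f) :: fs) (h' : decFactors r' = (b' :: f') :: fs')
    (hlen : (decFactors r').map List.length = (decFactors r).map List.length)
    (hcond : b' < a ↔ b < a) :
    (decFactors (a :: r')).map List.length = (decFactors (a :: r)).map List.length := by
  rw [decFactors_cons_of_eq h', decFactors_cons_of_eq h]
  rw [h, h'] at hlen
  simp only [List.map_cons, List.length_cons, List.cons.injEq] at hlen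
  obtain ⟨hfl, hfs⟩ := hlen
  by_cases hb : b < a
  · rw [if_pos hb, if_pos (hcond.mpr hb)]
    simp [hfl, hfs]
  · rw [if_neg hb, if_neg (fun hh => hb (hcond.mp hh))]
    simp [hfl, hfs]

lemma decFactors_set (t : List ℕ) (k : ℕ) (c : ℕ) (hk : k < t.length)
    (hL : ∀ j, j + 1 = k → (c < t.getD j 0 ↔ t.getD k 0 < t.getD j 0))
    (hR : k + 1 < t.length → (t.getD (k + 1) 0 < c ↔ t.getD (k + 1) 0 < t.getD k 0)) :
    (decFactors (t.set k c)).map List.length = (decFactors t).map List.length := by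
  induction t generalizing k with
  | nil => simp at hk
  | cons a r ih =>
    cases k with
    | zero =>
      rw [List.set_cons_zero]
      cases r with
      | nil => simp [decFactors]
      | cons x r2 =>
        obtain ⟨f, fs, hf⟩ := decFactors_cons_shape x r2
        have hcond : x < c ↔ x < a := by
          have := hR (by simp)
          simpa using this
        rw [decFactors_cons_of_eq hf c, decFactors_cons_of_eq hf a]
        by_cases h : x < a
        · rw [if_pos (hcond.mpr h), if_pos h]
          simp
        · rw [if_neg (fun hh => h (hcond.mp hh)), if_neg h]
          simp
    | succ j =>
      have hkr : j < r.length := by simpa using hk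
      rw [List.set_cons_succ]
      have ihr := ih j hkr ?_ ?_
      · cases r with
        | nil => simp at hkr
        | cons x r2 =>
          obtain ⟨f, fs, hf⟩ := decFactors_cons_shape x r2
          cases j with
          | zero =>
            rw [List.set_cons_zero] at ihr ⊢
            obtain ⟨f', fs', hf'⟩ := decFactors_cons_shape c r2
            have hcond : c < a ↔ x < a := by
              have := hL 0 rfl
              simpa using this
            exact decFactors_cons_congr a hf hf' ihr hcond
          | succ j' =>
            rw [List.set_cons_succ] at ihr ⊢
            obtain ⟨f', fs', hf'⟩ := decFactors_cons_shape x (r2.set j' c)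
            exact decFactors_cons_congr a hf hf' ihr Iff.rfl
      · intro j' hj'
        have h1 : (a :: r).getD (j' + 1) 0 = r.getD j' 0 := by simp
        have := hL (j' + 1) (by omega)
        simpa using this
      · intro hlt
        have := hR (by simpa using Nat.succ_lt_succ hlt)
        simpa using this

/-! ### Key structural facts about `reduce (signWord i u)` -/

section Claims

variable {i : ℕ} {u : List ℕ}

/-- Elements of `reduce (signWord i u)` give letters of `u`. -/
lemma letter_of_mem_reduce {k : ℕ} {b : Bool} (h : (k, b) ∈ reduce (signWord i u)) :
    k < u.length ∧ u.getD k 0 = (if b then i else i + 1) :=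
  mem_signWord.mp ((reduce_sublist _).subset h)

/-- If `(k, c1)` and `(k+1, c2)` both occur in the sign word, we can split it. -/
lemma signWord_split {k : ℕ} {c1 c2 : Bool}
    (h1 : (k, c1) ∈ signWord i u) (h2 : (k + 1, c2) ∈ signWord i u) :
    ∃ A B, signWord i u = A ++ (k, c1) :: (k + 1, c2) :: B :=
  pairwise_split (signWord_pairwise i u) h1 h2

/-- Position bounds from a split of the pairwise-increasing sign word. -/
lemma split_bounds {k : ℕ} {c1 c2 : Bool} {A B : List (ℕ × Bool)}
    (hsplit : signWord i u = A ++ (k, c1) :: (k + 1, c2) :: B) :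
    (∀ x ∈ A, x.1 < k) ∧ (∀ x ∈ B, k + 1 < x.1) := by
  have hpw := signWord_pairwise i u
  rw [hsplit] at hpw
  obtain ⟨hA, hrest, hAB⟩ := List.pairwise_append.mp hpw
  obtain ⟨h1, hrest2⟩ := List.pairwise_cons.mp hrest
  obtain ⟨h2, _⟩ := List.pairwise_cons.mp hrest2
  constructor
  · intro x hx
    exact hAB x hx (k, c1) List.mem_cons_self
  · intro x hx
    exact h2 x hx

/-- "Cancellation" claim: if `(k, false)` is followed immediately by `(k+1, true)`
in the sign word, or `(k, true)` is preceded immediately by `(k-1, false)`, then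
the relevant element is destroyed by the reduction. -/
lemma not_mem_reduce_of_cancel {k : ℕ} {A B : List (ℕ × Bool)} {x : ℕ × Bool}
    (hsplit : signWord i u = A ++ (k, false) :: (k + 1, true) :: B)
    (hxA : x ∉ A) (hxB : x ∉ B) :
    x ∉ reduce (signWord i u) := by
  intro hmem
  rw [hsplit, reduce_append] at hmem
  have hinner : reduce ((k, false) :: (k + 1, true) :: B) = reduce B := by
    rw [reduce_cons, reduce_cons, step_true (x := ((k + 1 : ℕ), true)) rfl,
      step_false_cons_true rfl rfl]
  rw [hinner] at hmem
  have := (foldr_step_sublist A (reduce B)).subset hmem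
  rcases List.mem_append.mp this with h | h
  · exact hxA h
  · exact hxB ((reduce_sublist B).subset h)

end Claims

/-- Let `u ∈ 𝒜_n^*` and `i ∈ {1,…,n−1}`. If the Kashiwara operator
`ẽ_i` (resp. `f̃_i`) is defined on `u`, then the sequence of lengths of the maximal
strictly decreasing factors of the result equals that of `u`; i.e. the Kashiwara
operators preserve the shape of the associated quasi-ribbon tabloid. -/
theorem kashiwara_preserves_tabloid_shape (n : ℕ) (u : List ℕ) (hu : IsWord n u)
    (i : ℕ) (hi1 : 1 ≤ i) (hi2 : i < n) :
    (∀ v, KE i u = some v →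
      (decFactors v).map List.length = (decFactors u).map List.length) ∧
    (∀ v, KF i u = some v →
      (decFactors v).map List.length = (decFactors u).map List.length) := by
  constructor
  · -- the raising operator `ẽ_i`
    intro v hv
    unfold KE at hv
    obtain ⟨x, hhead, hvx⟩ := Option.map_eq_some_iff.mp hv
    subst hvx
    have hxf : x ∈ (reduce (signWord i u)).filter fun y => !y.2 :=
      List.mem_of_mem_head? hhead
    have hx2 : x.2 = false := by
      have := List.of_mem_filter hxf
      simpa using this
    have hxpair : x = (x.1, false) := by rw [← hx2]
    set k := x.1 with hkdef
    have hxr : (k, false) ∈ reduce (signWord i u) := by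
      rw [← hxpair]; exact List.mem_of_mem_filter hxf
    obtain ⟨hklen, hkval⟩ := letter_of_mem_reduce hxr
    have hkv : u.getD k 0 = i + 1 := by simpa using hkval
    have hmemk : (k, false) ∈ signWord i u := (reduce_sublist _).subset hxr
    -- the right neighbour is not `i`
    have hA : k + 1 < u.length → u.getD (k + 1) 0 ≠ i := by
      intro hl hval
      have h2 : (k + 1, true) ∈ signWord i u := mem_signWord.mpr ⟨hl, by simpa using hval⟩
      obtain ⟨A, B, hsplit⟩ := signWord_split hmemk h2
      obtain ⟨hApos, hBpos⟩ := split_bounds hsplit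
      refine not_mem_reduce_of_cancel hsplit ?_ ?_ hxr
      · intro hmem
        have := hApos _ hmem
        simp at this
      · intro hmem
        have := hBpos _ hmem
        simp at this
    -- the left neighbour is not `i + 1`
    have hB : ∀ j, j + 1 = k → u.getD j 0 ≠ i + 1 := by
      intro j hj hval
      have hjlen : j < u.length := by omega
      have h1 : (j, false) ∈ signWord i u := mem_signWord.mpr ⟨hjlen, by simpa using hval⟩
      have h2 : (j + 1, false) ∈ signWord i u := by rw [hj]; exact hmemk
      obtain ⟨A, B, hsplit⟩ := signWord_split h1 h2
      obtain ⟨hApos, hBpos⟩ := split_bounds hsplit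
      rw [hj] at hsplit hBpos
      by_cases hcase : ∃ z r, reduce B = z :: r ∧ z.2 = true
      · -- the reduced word of `B` starts with `+`: `(k, false)` gets cancelled
        obtain ⟨z, r, hzr, hz⟩ := hcase
        have hinner : reduce ((j, false) :: (k, false) :: B) = step (j, false) r := by
          rw [reduce_cons, reduce_cons, hzr,
            step_false_cons_true (x := ((k : ℕ), false)) rfl hz]
        have hxr' := hxr
        rw [hsplit, reduce_append, hinner] at hxr'
        have hmem2 := (foldr_step_sublist A _).subset hxr'
        rcases List.mem_append.mp hmem2 with h | h
        · have := hApos _ h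
          simp at this
          omega
        · have h' := (step_sublist _ _).subset h
          rcases List.mem_cons.mp h' with h'' | h''
          · have := congrArg Prod.fst h''
            simp at this
            omega
          · have : (k, false) ∈ B := (reduce_sublist B).subset (hzr ▸ List.mem_cons_of_mem z h'')
            have := hBpos _ this
            simp at this
      · -- the reduced word of `B` is all `−`
        have hallB : ∀ y ∈ reduce B, y.2 = false := by
          apply allFalse_reduce_of_head
          intro y hy
          cases hzr : reduce B with
          | nil => rw [hzr] at hy; simp at hy
          | cons z r =>
            rw [hzr] at hy
            simp only [List.head?_cons, Option.mem_def, Option.some.injEq] at hy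
            subst hy
            by_contra hcon
            exact hcase ⟨_, r, hzr, by simpa using hcon⟩
        have hall : ∀ y ∈ (j, false) :: (k, false) :: reduce B, Prod.snd y = false := by
          intro y hy
          rcases List.mem_cons.mp hy with h | h
          · rw [h]
          · rcases List.mem_cons.mp h with h' | h'
            · rw [h']
            · exact hallB y h'
        have hinner : reduce ((j, false) :: (k, false) :: B) =
            (j, false) :: (k, false) :: reduce B := by
          rw [reduce_cons, reduce_cons]
          have h1 : step ((k : ℕ), false) (reduce B) = (k, false) :: reduce B := by
            cases hzr : reduce B with
            | nil => rw [step_nil]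
            | cons z r =>
              have hz : z.2 = false := hallB z (by rw [hzr]; exact List.mem_cons_self)
              rw [step_cons_false hz]
          rw [h1, step_cons_false (y := ((k : ℕ), false)) rfl]
        obtain ⟨t, hteq, htsub⟩ := foldr_step_allFalse A hall
        have hhead' := hhead
        rw [hxpair] at hhead'
        rw [hsplit, reduce_append, hinner, hteq, List.filter_append] at hhead' 
        have hfs : ((j, false) :: (k, false) :: reduce B).filter (fun y => !y.2) =
            (j, false) :: (k, false) :: reduce B :=
          List.filter_eq_self.mpr (by intro y hy; simpa using hall y hy)
        rw [hfs] at hhead'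
        cases hft : t.filter (fun y => !y.2) with
        | nil =>
          rw [hft] at hhead'
          simp only [List.nil_append, List.head?_cons, Option.some.injEq] at hhead'
          have := congrArg Prod.fst hhead'
          simp at this
          omega
        | cons w ws =>
          rw [hft] at hhead'
          simp only [List.cons_append, List.head?_cons, Option.some.injEq] at hhead' 
          have hwA : w ∈ A := htsub.subset ((List.filter_sublist (l := t)).subset
            (by rw [hft]; exact List.mem_cons_self))
          have := hApos _ hwA
          rw [hhead'] at this
          simp at this
          omega
    -- now apply the shape lemma
    refine decFactors_set u k i hklen ?_ ?_
    · intro j hj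
      have hne := hB j hj
      rw [hkv]
      constructor <;> intro h <;> omega
    · intro hl
      have hne := hA hl
      rw [hkv]
      constructor <;> intro h <;> omega
  · -- the lowering operator `f̃_i`
    intro v hv
    unfold KF at hv
    obtain ⟨x, hlast, hvx⟩ := Option.map_eq_some_iff.mp hv
    subst hvx
    have hxf : x ∈ (reduce (signWord i u)).filter fun y => y.2 := by
      obtain ⟨hh, heq⟩ := List.mem_getLast?_eq_getLast (l := _) (x := x) hlast
      rw [heq]
      exact List.getLast_mem hh
    have hx2 : x.2 = true := by
      have := List.of_mem_filter hxf
      simpa using this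
    have hxpair : x = (x.1, true) := by rw [← hx2]
    set k := x.1 with hkdef
    have hxr : (k, true) ∈ reduce (signWord i u) := by
      rw [← hxpair]; exact List.mem_of_mem_filter hxf
    obtain ⟨hklen, hkval⟩ := letter_of_mem_reduce hxr
    have hkv : u.getD k 0 = i := by simpa using hkval
    have hmemk : (k, true) ∈ signWord i u := (reduce_sublist _).subset hxr
    -- the left neighbour is not `i + 1`
    have hB : ∀ j, j + 1 = k → u.getD j 0 ≠ i + 1 := by
      intro j hj hval
      have hjlen : j < u.length := by omega
      have h1 : (j, false) ∈ signWord i u := mem_signWord.mpr ⟨hjlen, by simpa using hval⟩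
      have h2 : (j + 1, true) ∈ signWord i u := by rw [hj]; exact hmemk
      obtain ⟨A, B, hsplit⟩ := signWord_split h1 h2
      obtain ⟨hApos, hBpos⟩ := split_bounds hsplit
      refine not_mem_reduce_of_cancel (x := ((j + 1 : ℕ), true)) hsplit ?_ ?_ ?_
      · intro hmem
        have := hApos _ hmem
        simp at this
      · intro hmem
        have := hBpos _ hmem
        simp at this
      · rw [hj]; exact hxr
    -- the right neighbour is not `i`
    have hA : k + 1 < u.length → u.getD (k + 1) 0 ≠ i := by
      intro hl hval
      have h2 : (k + 1, true) ∈ signWord i u := mem_signWord.mpr ⟨hl, by simpa using hval⟩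
      obtain ⟨A, B, hsplit⟩ := signWord_split hmemk h2
      obtain ⟨hApos, hBpos⟩ := split_bounds hsplit
      have hinner : reduce ((k, true) :: (k + 1, true) :: B) =
          (k, true) :: (k + 1, true) :: reduce B := by
        rw [reduce_cons, reduce_cons, step_true (x := ((k + 1 : ℕ), true)) rfl,
          step_true (x := ((k : ℕ), true)) rfl]
      obtain ⟨t, m, hteq, htsub⟩ :=
        foldr_step_drop A ((k, true) :: (k + 1, true) :: reduce B)
      have hxr' := hxr
      rw [hsplit, reduce_append, hinner, hteq] at hxr'
      rcases List.mem_append.mp hxr' with h | h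
      · have := hApos _ (htsub.subset h)
        simp at this
      · cases m with
        | succ m' =>
          rw [List.drop_succ_cons] at h
          have h' := (List.drop_sublist m' _).subset h
          rcases List.mem_cons.mp h' with h'' | h''
          · have := congrArg Prod.fst h''
            simp at this
          · have := hBpos _ ((reduce_sublist B).subset h'')
            simp at this
        | zero =>
          rw [List.drop_zero] at hteq
          have hlast' := hlast
          rw [hxpair] at hlast'
          rw [hsplit, reduce_append, hinner, hteq, List.filter_append] at hlast'
          have hfs : ((k, true) :: (k + 1, true) :: reduce B).filter (fun y => y.2) =
              (k, true) :: (k + 1, true) :: (reduce B).filter (fun y => y.2) := by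
            simp
          rw [hfs] at hlast'
          rw [List.getLast?_append_of_ne_nil _ (by simp), List.getLast?_cons_cons] at hlast'
          obtain ⟨hh, heq⟩ := List.mem_getLast?_eq_getLast (x := ((k : ℕ), true)) hlast'
          have hmem' : ((k : ℕ), true) ∈ (k + 1, true) :: (reduce B).filter (fun y => y.2) := by
            rw [heq]
            exact List.getLast_mem hh
          rcases List.mem_cons.mp hmem' with h'' | h''
          · have := congrArg Prod.fst h''
            simp at this
          · have hmB : ((k : ℕ), true) ∈ B :=
              (reduce_sublist B).subset (List.mem_of_mem_filter h'')
            have := hBpos _ hmB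
            simp at this
    -- now apply the shape lemma
    refine decFactors_set u k (i + 1) hklen ?_ ?_
    · intro j hj
      have hne := hB j hj
      rw [hkv]
      constructor <;> intro h <;> omega
    · intro hl
      have hne := hA hl
      rw [hkv]
      constructor <;> intro h <;> omega

end HypoCrystal
end

section
/- Let u, v ∈ 𝒜_n^* and i ∈ {1,...,n−1}. If f_i(u) = v (i.e., there is an edge from u to v labelled i in the quasi-crystal graph), then f_{n−i}(v^♯) is defined and f_{n−i}(v^♯) = u^♯ (i.e., there is an edge from v^♯ to u^♯ labelled n−i). In particular, the Schützenberger involution maps connected components of the quasi-crystal graph to connected components. -/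
namespace HypoCrystal

private lemma replaceFirst_eq_some {a b : ℕ} : ∀ {l m : List ℕ},
    replaceFirst a b l = some m ↔ ∃ p q, l = p ++ a :: q ∧ a ∉ p ∧ m = p ++ b :: q := by
  intro l
  induction l with
  | nil => intro m; simp [replaceFirst]
  | cons x xs ih =>
    intro m
    by_cases hx : x = a
    · simp only [replaceFirst, if_pos hx, Option.some.injEq]
      constructor
      · rintro rfl
        exact ⟨[], xs, by simp [hx], by simp, rfl⟩
      · rintro ⟨p, q, hl, hp, hm⟩
        cases p with
        | nil =>
          simp only [List.nil_append, List.cons.injEq] at hl hm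
          rw [hm, hl.2]
        | cons y p =>
          simp only [List.cons_append, List.cons.injEq] at hl
          exact absurd (by simp [← hl.1, hx] : a ∈ y :: p) hp
    · simp only [replaceFirst, if_neg hx, Option.map_eq_some_iff]
      constructor
      · rintro ⟨m', hm', rfl⟩
        obtain ⟨p, q, rfl, hp, rfl⟩ := ih.1 hm'
        refine ⟨x :: p, q, rfl, ?_, rfl⟩
        intro hmem
        rcases List.mem_cons.1 hmem with h | h
        · exact hx h.symm
        · exact hp h
      · rintro ⟨p, q, hl, hp, hm⟩
        cases p with
        | nil =>
          simp only [List.nil_append, List.cons.injEq] at hl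
          exact absurd hl.1 hx
        | cons y p =>
          simp only [List.cons_append, List.cons.injEq] at hl
          obtain ⟨rfl, hxs⟩ := hl
          have hp' : a ∉ p := fun h => hp (by simp [h])
          refine ⟨p ++ b :: q, ih.2 ⟨p, q, hxs, hp', rfl⟩, ?_⟩
          rw [hm]; simp

private lemma qf_eq_some {i : ℕ} {u v : List ℕ} :
    qf i u = some v ↔
      ¬ HasInv i u ∧ ∃ A B, u = A ++ i :: B ∧ i ∉ B ∧ v = A ++ (i+1) :: B := by
  unfold qf
  by_cases h : HasInv i u
  · simp [h]
  · rw [if_neg h, Option.map_eq_some_iff]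
    simp only [h, not_false_iff, true_and]
    constructor
    · rintro ⟨w, hw, rfl⟩
      obtain ⟨p, q, hl, hp, rfl⟩ := replaceFirst_eq_some.1 hw
      refine ⟨q.reverse, p.reverse, ?_, by simpa using hp, by simp⟩
      have := congrArg List.reverse hl
      simpa using this
    · rintro ⟨A, B, rfl, hB, rfl⟩
      refine ⟨B.reverse ++ (i+1) :: A.reverse, ?_, by simp⟩
      exact replaceFirst_eq_some.2 ⟨B.reverse, A.reverse, by simp, by simpa using hB, rfl⟩

private lemma noInv_split {i : ℕ} {l P Q : List ℕ} (hl : l = P ++ Q)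
    (hP : (i+1) ∉ P) (hQ : i ∉ Q) : ¬ HasInv i l := by
  rintro ⟨v, w, x, hvwx⟩
  rw [hl] at hvwx
  have hp1 : (P ++ Q)[v.length]? = some (i + 1) := by
    have h2 : P ++ Q = v ++ ((i+1) :: (w ++ i :: x)) := by rw [hvwx]; simp
    rw [h2, List.getElem?_append_right (le_refl _)]
    simp
  have hq1 : (P ++ Q)[(v ++ (i+1) :: w).length]? = some i := by
    rw [hvwx, List.getElem?_append_right (le_refl _)]
    simp
  have hPv : P.length ≤ v.length := by
    by_contra hlt
    push_neg at hlt
    rw [List.getElem?_append_left hlt] at hp1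
    exact hP (List.mem_of_getElem? hp1)
  rw [List.getElem?_append_right (show P.length ≤ (v ++ (i+1) :: w).length by
    simp; omega)] at hq1
  exact hQ (List.mem_of_getElem? hq1)

private lemma main_step {n : ℕ} (u v : List ℕ) (hu : IsWord n u) (i : ℕ)
    (hi1 : 1 ≤ i) (hi2 : i < n) (hf : qf i u = some v) :
    qf (n - i) (sharp n v) = some (sharp n u) := by
  obtain ⟨hnoinv, A, B, hAB, hiB, hv⟩ := qf_eq_some.1 hf
  -- i+1 ∉ A
  have hiA : (i+1) ∉ A := by
    intro hmem
    obtain ⟨s, t, rfl⟩ := List.append_of_mem hmem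
    exact hnoinv ⟨s, t, B, by simp [hAB]⟩
  have hwA : ∀ a ∈ A, 1 ≤ a ∧ a ≤ n := fun a ha => hu a (by simp [hAB, ha])
  have hwB : ∀ a ∈ B, 1 ≤ a ∧ a ≤ n := fun a ha => hu a (by simp [hAB, ha])
  set f : ℕ → ℕ := fun a => n + 1 - a with hfdef
  have hfi : f i = (n - i) + 1 := by simp [hfdef]; omega
  have hfi1 : f (i+1) = n - i := by simp [hfdef]
  -- decompositions of sharps
  have hsv : sharp n v = B.reverse.map f ++ (n - i) :: A.reverse.map f := by
    rw [hv]; simp [sharp, hfi1, hfdef]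
  have hsu : sharp n u = B.reverse.map f ++ ((n - i) + 1) :: A.reverse.map f := by
    rw [hAB]; simp [sharp, hfdef]; omega
  apply qf_eq_some.2
  refine ⟨?_, B.reverse.map f, A.reverse.map f, hsv, ?_, hsu⟩
  · -- no (n-i)-inversion in sharp n v
    refine noInv_split (P := B.reverse.map f ++ [n - i]) (Q := A.reverse.map f)
      (by rw [hsv]; simp) ?_ ?_
    · intro hmem
      simp only [List.mem_append, List.mem_map, List.mem_reverse, List.mem_singleton] at hmem
      rcases hmem with ⟨a, ha, hfa⟩ | hbad
      · obtain ⟨h1, h2⟩ := hwB a ha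
        have : a = i := by simp [hfdef] at hfa; omega
        exact hiB (this ▸ ha)
      · omega
    · intro hmem
      simp only [List.mem_map, List.mem_reverse] at hmem
      obtain ⟨a, ha, hfa⟩ := hmem
      obtain ⟨h1, h2⟩ := hwA a ha
      have : a = i + 1 := by simp [hfdef] at hfa; omega
      exact hiA (this ▸ ha)
  · intro hmem
    simp only [List.mem_map, List.mem_reverse] at hmem
    obtain ⟨a, ha, hfa⟩ := hmem
    obtain ⟨h1, h2⟩ := hwA a ha
    have : a = i + 1 := by simp [hfdef] at hfa; omega
    exact hiA (this ▸ ha)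

private lemma isWord_of_qf {n i : ℕ} {u v : List ℕ} (hi2 : i < n)
    (hu : IsWord n u) (hf : qf i u = some v) : IsWord n v := by
  obtain ⟨-, A, B, hAB, -, hv⟩ := qf_eq_some.1 hf
  intro a ha
  rw [hv] at ha
  simp only [List.mem_append, List.mem_cons] at ha
  rcases ha with h | h | h
  · exact hu a (by simp [hAB, h])
  · omega
  · exact hu a (by simp [hAB, h])

private lemma isWord_of_qf' {n i : ℕ} {u v : List ℕ} (hi1 : 1 ≤ i) (hi2 : i < n)
    (hu : IsWord n v) (hf : qf i u = some v) : IsWord n u := by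
  obtain ⟨-, A, B, hAB, -, hv⟩ := qf_eq_some.1 hf
  intro a ha
  rw [hAB] at ha
  simp only [List.mem_append, List.mem_cons] at ha
  rcases ha with h | h | h
  · exact hu a (by simp [hv, h])
  · omega
  · exact hu a (by simp [hv, h])

/-- Let `u, v ∈ 𝒜_n^*` and `i ∈ {1,…,n−1}`. If `f_i(u) = v`, then
`f_{n−i}(v^♯)` is defined and equals `u^♯`, where `♯` is the Schützenberger involution.
In particular, the Schützenberger involution maps connected components of the
quasi-crystal graph to connected components. -/
theorem schuetzenberger_involution_on_quasicrystal (n : ℕ) :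
    (∀ u v : List ℕ, IsWord n u → ∀ i, 1 ≤ i → i < n →
      qf i u = some v → qf (n - i) (sharp n v) = some (sharp n u)) ∧
    (∀ u v : List ℕ, IsWord n u → SameComp n u v →
      SameComp n (sharp n u) (sharp n v)) := by
  constructor
  · exact fun u v hu i hi1 hi2 hf => main_step u v hu i hi1 hi2 hf
  · intro u v hu hcomp
    have key : IsWord n v ∧ SameComp n (sharp n u) (sharp n v) := by
      induction hcomp with
      | refl => exact ⟨hu, Relation.ReflTransGen.refl⟩
      | tail hbc hadj ih =>
        rename_i b c
        obtain ⟨hwb, hsb⟩ := ih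
        obtain ⟨i, hE | hE⟩ := hadj
        · obtain ⟨hi1, hi2, hf⟩ := hE
          have hwc : IsWord n c := isWord_of_qf hi2 hwb hf
          have := main_step b c hwb i hi1 hi2 hf
          refine ⟨hwc, hsb.tail ⟨n - i, Or.inr ⟨by omega, by omega, this⟩⟩⟩
        · obtain ⟨hi1, hi2, hf⟩ := hE
          have hwc : IsWord n c := isWord_of_qf' hi1 hi2 hwb hf
          have := main_step c b hwc i hi1 hi2 hf
          refine ⟨hwc, hsb.tail ⟨n - i, Or.inl ⟨by omega, by omega, this⟩⟩⟩
    exact key.2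

end HypoCrystal
end

section
/- Let u, v ∈ 𝒜_n^* with wt(u) = wt(v). Then there exist g, h ∈ 𝒜_n^* such that ug ≡_hypo gv and hu ≡_hypo vh; that is, the images of u and v in the hypoplactic monoid hypo_n = 𝒜_n^*/≡_hypo are o-conjugate. -/
namespace HypoCrystal


/-- The descending staircase word `[k, k-1, …, 1]`. -/
def Dw : ℕ → List ℕ
  | 0 => []
  | (k+1) => (k+1) :: Dw k

theorem consCtx {n : ℕ} (x : ℕ) {u v : List ℕ} (h : HypoCong n u v) :
    HypoCong n (x :: u) (x :: v) := by
  simpa using (HypoCong.refl [x]).append h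

theorem k1c {n a b c : ℕ} (t : List ℕ) (h1 : 1 ≤ a) (h2 : a ≤ b) (h3 : b < c) (h4 : c ≤ n) :
    HypoCong n (a :: c :: b :: t) (c :: a :: b :: t) := by
  simpa using (HypoCong.of (HypoRel.knuth1 h1 h2 h3 h4)).append (HypoCong.refl t)

theorem k2c {n a b c : ℕ} (t : List ℕ) (h1 : 1 ≤ a) (h2 : a < b) (h3 : b ≤ c) (h4 : c ≤ n) :
    HypoCong n (b :: a :: c :: t) (b :: c :: a :: t) := by
  simpa using (HypoCong.of (HypoRel.knuth2 h1 h2 h3 h4)).append (HypoCong.refl t)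

theorem q1c {n a b c d : ℕ} (t : List ℕ) (h1 : 1 ≤ a) (h2 : a ≤ b) (h3 : b < c) (h4 : c ≤ d)
    (h5 : d ≤ n) :
    HypoCong n (c :: a :: d :: b :: t) (a :: c :: b :: d :: t) := by
  simpa using (HypoCong.of (HypoRel.quasi1 h1 h2 h3 h4 h5)).append (HypoCong.refl t)

theorem q2c {n a b c d : ℕ} (t : List ℕ) (h1 : 1 ≤ a) (h2 : a < b) (h3 : b ≤ c) (h4 : c < d)
    (h5 : d ≤ n) :
    HypoCong n (b :: d :: a :: c :: t) (d :: b :: c :: a :: t) := by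
  simpa using (HypoCong.of (HypoRel.quasi2 h1 h2 h3 h4 h5)).append (HypoCong.refl t)

theorem Dw_word {n : ℕ} : ∀ k, k ≤ n → IsWord n (Dw k) := by
  intro k
  induction k with
  | zero => intro _ a ha; simp [Dw] at ha
  | succ m ih =>
    intro hk a ha
    rcases List.mem_cons.mp ha with h | h
    · omega
    · exact ih (by omega) a h

theorem lemC {n : ℕ} (k : ℕ) (hk : k ≤ n) :
    ∀ m, m < k → HypoCong n ((m+1) :: (Dw m ++ [k])) ((m+1) :: k :: Dw m) := by
  intro m
  induction m with
  | zero => intro _; exact HypoCong.refl _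
  | succ m ih =>
    intro hm
    have step1 : HypoCong n ((m+2) :: ((m+1) :: (Dw m ++ [k]))) ((m+2) :: ((m+1) :: k :: Dw m)) :=
      consCtx (m+2) (ih (by omega))
    have step2 : HypoCong n ((m+2) :: (m+1) :: k :: Dw m) ((m+2) :: k :: (m+1) :: Dw m) :=
      k2c (Dw m) (by omega) (by omega) (by omega) hk
    exact (step1.trans step2)

theorem lemL1 {n : ℕ} : ∀ k c, 1 ≤ c → c ≤ k → k ≤ n →
    HypoCong n (c :: Dw k) (Dw k ++ [c]) := by
  intro k
  induction k with
  | zero => intro c h1 h2 _; omega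
  | succ m ih =>
    intro c h1 h2 hk
    by_cases hc : c = m + 1
    · subst hc
      have h := lemC (n := n) (m+1) hk m (by omega)
      exact h.symm
    · have hcm : c ≤ m := by omega
      -- m ≥ 1 since 1 ≤ c ≤ m
      obtain ⟨p, rfl⟩ : ∃ p, m = p + 1 := ⟨m - 1, by omega⟩
      -- goal : c :: Dw (p+2) ≡ Dw (p+2) ++ [c]
      have step1 : HypoCong n (c :: (p+2) :: (p+1) :: Dw p) ((p+2) :: c :: (p+1) :: Dw p) :=
        k1c (Dw p) h1 (by omega) (by omega) hk
      have step2 : HypoCong n ((p+2) :: (c :: Dw (p+1))) ((p+2) :: (Dw (p+1) ++ [c])) :=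
        consCtx (p+2) (ih c h1 (by omega) (by omega))
      exact step1.trans step2

theorem commD {n : ℕ} : ∀ w, (∀ c ∈ w, 1 ≤ c ∧ c ≤ n) →
    HypoCong n (w ++ Dw n) (Dw n ++ w) := by
  intro w
  induction w with
  | nil => intro _; simpa using HypoCong.refl (Dw n)
  | cons c w' ih =>
    intro hb
    have hc := hb c List.mem_cons_self
    have step1 : HypoCong n (c :: (w' ++ Dw n)) (c :: (Dw n ++ w')) :=
      consCtx c (ih (fun x hx => hb x (List.mem_cons_of_mem c hx)))
    have step2 : HypoCong n ((c :: Dw n) ++ w') ((Dw n ++ [c]) ++ w') :=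
      (lemL1 n c hc.1 hc.2 le_rfl).append (HypoCong.refl w')
    have e1 : (c :: Dw n) ++ w' = c :: (Dw n ++ w') := by simp
    have e2 : (Dw n ++ [c]) ++ w' = Dw n ++ (c :: w') := by simp
    rw [e1, e2] at step2
    exact step1.trans step2

theorem swapD {n : ℕ} (a b : ℕ) (h1 : 1 ≤ a) (hab : a < b) :
    ∀ k, b ≤ k → k ≤ n → ∀ t, HypoCong n (b :: a :: (Dw k ++ t)) (a :: b :: (Dw k ++ t)) := by
  intro k hbk
  induction k, hbk using Nat.le_induction with
  | base =>
    intro hkn t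
    obtain ⟨m, rfl⟩ : ∃ m, b = m + 2 := ⟨b - 2, by omega⟩
    -- Dw (m+2) ++ t = (m+2) :: (m+1) :: (Dw m ++ t)
    have e : Dw (m+2) ++ t = (m+2) :: (m+1) :: (Dw m ++ t) := by simp [Dw]
    rw [e]
    have step1 : HypoCong n ((m+2) :: a :: (m+2) :: (m+1) :: (Dw m ++ t))
        (a :: (m+2) :: (m+1) :: (m+2) :: (Dw m ++ t)) :=
      q1c (Dw m ++ t) h1 (by omega) (by omega) (by omega) hkn
    have step2 : HypoCong n ((m+2) :: (m+1) :: (m+2) :: (Dw m ++ t))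
        ((m+2) :: (m+2) :: (m+1) :: (Dw m ++ t)) :=
      k2c (Dw m ++ t) (by omega) (by omega) (by omega) hkn
    exact step1.trans (consCtx a step2)
  | succ k hbk ih =>
    intro hkn t
    obtain ⟨j, hj⟩ : ∃ j, k = j + 1 := ⟨k - 1, by omega⟩
    have e : Dw (k+1) ++ t = (k+1) :: k :: (Dw j ++ t) := by
      subst hj; simp [Dw]
    have e2 : Dw k ++ t = k :: (Dw j ++ t) := by subst hj; simp [Dw]
    rw [e]
    -- s1 : b a (k+1) k … ≡ b (k+1) a k …
    have s1 : HypoCong n (b :: a :: (k+1) :: k :: (Dw j ++ t))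
        (b :: (k+1) :: a :: k :: (Dw j ++ t)) :=
      k2c (k :: (Dw j ++ t)) h1 hab (by omega) hkn
    -- s2 : quasi2 (a,b,k,k+1) : b (k+1) a k ≡ (k+1) b k a
    have s2 : HypoCong n (b :: (k+1) :: a :: k :: (Dw j ++ t))
        ((k+1) :: b :: k :: a :: (Dw j ++ t)) :=
      q2c (Dw j ++ t) h1 hab hbk (by omega) hkn
    -- s3 : (k+1) b k a ≡ (k+1) b a k
    have s3 : HypoCong n (b :: a :: k :: (Dw j ++ t)) (b :: k :: a :: (Dw j ++ t)) :=
      k2c (Dw j ++ t) h1 hab hbk (by omega)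
    -- s4 : IH
    have s4 : HypoCong n (b :: a :: (Dw k ++ t)) (a :: b :: (Dw k ++ t)) :=
      ih (by omega) t
    rw [e2] at s4
    -- s5 : (k+1) a b … ≡ a (k+1) b …
    have s5 : HypoCong n (a :: (k+1) :: b :: k :: (Dw j ++ t))
        ((k+1) :: a :: b :: k :: (Dw j ++ t)) :=
      k1c (k :: (Dw j ++ t)) h1 (by omega) (by omega) hkn
    -- s6 : b (k+1) k ≡ (k+1) b k  i.e. knuth1 (b,k,k+1)
    have s6 : HypoCong n (b :: (k+1) :: k :: (Dw j ++ t)) ((k+1) :: b :: k :: (Dw j ++ t)) :=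
      k1c (Dw j ++ t) (by omega) hbk (by omega) hkn
    exact s1.trans (s2.trans ((consCtx (k+1) (s3.symm.trans s4)).trans
      (s5.symm.trans (consCtx a s6.symm))))

theorem swapFront {n : ℕ} {a b : ℕ} (h1 : 1 ≤ a) (hab : a < b) (hbn : b ≤ n)
    (l : List ℕ) (hl : ∀ c ∈ l, 1 ≤ c ∧ c ≤ n) :
    HypoCong n (b :: a :: (l ++ Dw n)) (a :: b :: (l ++ Dw n)) := by
  have hcomm := commD (n := n) l hl
  have step1 : HypoCong n (b :: a :: (l ++ Dw n)) (b :: a :: (Dw n ++ l)) :=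
    consCtx b (consCtx a hcomm)
  have step2 : HypoCong n (b :: a :: (Dw n ++ l)) (a :: b :: (Dw n ++ l)) :=
    swapD a b h1 hab n hbn le_rfl l
  have step3 : HypoCong n (a :: b :: (Dw n ++ l)) (a :: b :: (l ++ Dw n)) :=
    consCtx a (consCtx b hcomm.symm)
  exact step1.trans (step2.trans step3)

theorem permD {n : ℕ} : ∀ {u v : List ℕ}, u.Perm v → (∀ c ∈ u, 1 ≤ c ∧ c ≤ n) →
    HypoCong n (u ++ Dw n) (v ++ Dw n) := by
  intro u v h
  induction h with
  | nil => intro _; exact HypoCong.refl _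
  | cons x h ih =>
    intro hb
    exact consCtx x (ih (fun c hc => hb c (List.mem_cons_of_mem x hc)))
  | swap x y l =>
    intro hb
    have hx := hb x (by simp)
    have hy := hb y (by simp)
    have hl : ∀ c ∈ l, 1 ≤ c ∧ c ≤ n := fun c hc => hb c (by simp [hc])
    show HypoCong n (y :: x :: (l ++ Dw n)) (x :: y :: (l ++ Dw n))
    rcases lt_trichotomy x y with hlt | heq | hgt
    · exact swapFront hx.1 hlt hy.2 l hl
    · subst heq; exact HypoCong.refl _
    · exact (swapFront hy.1 hgt hx.2 l hl).symm
  | trans h1 h2 ih1 ih2 =>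
    intro hb
    exact (ih1 hb).trans (ih2 (fun c hc => hb c (h1.symm.subset hc)))

/-- Let `u, v ∈ 𝒜_n^*` with `wt(u) = wt(v)`. Then there exist
`g, h ∈ 𝒜_n^*` such that `ug ≡_hypo gv` and `hu ≡_hypo vh`; that is, the images of `u`
and `v` in the hypoplactic monoid `hypo_n` are o-conjugate. -/
theorem same_weight_implies_o_conjugate (n : ℕ) (u v : List ℕ)
    (hu : IsWord n u) (hv : IsWord n v) (hwt : wt u = wt v) :
    ∃ g h : List ℕ, IsWord n g ∧ IsWord n h ∧
      HypoCong n (u ++ g) (g ++ v) ∧ HypoCong n (h ++ u) (v ++ h) := by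
  have hcnt : ∀ a, u.count a = v.count a := fun a => congrFun hwt a
  have hperm : u.Perm v := List.perm_iff_count.mpr hcnt
  refine ⟨Dw n, Dw n, Dw_word n le_rfl, Dw_word n le_rfl, ?_, ?_⟩
  · exact (permD hperm hu).trans (commD v hv)
  · exact (commD u hu).symm.trans (permD hperm hu)

end HypoCrystal
end
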